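/- arXiv:1305.6376 — 3 statements merged into one kernel-verified Lean document; each statement's English description precedes it below -/
import Mathlib

section
/- For d ≥ 2 and h ≥ 3, and any E ∈ (0, 1/2], there exists a fractional pebbling of the balanced d-ary tree of height h starting from the configuration with white weight 2E on the root and nothing elsewhere, ending with the empty configuration, such that the total weight never exceeds (d−1)h/2 + 1 + E. -/
/-- Number of nodes of the complete d-ary tree of height h (levels 0..h-1). -/
def treeSize (d h : ℕ) : ℕ := ∑ k ∈ Finset.range h, d ^ k

/-- A fractional configuration: each node gets (black weight, white weight). -/
abbrev Cfg := ℕ → ℝ × ℝ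

/-- Pebble weight of node i: b(i) + w(i). -/
def pw (c : Cfg) (i : ℕ) : ℝ := (c i).1 + (c i).2

/-- Valid configuration: weights nonnegative, b(i)+w(i) ≤ 1, nothing outside the tree. -/
def Valid (n : ℕ) (c : Cfg) : Prop :=
  (∀ i, 0 ≤ (c i).1 ∧ 0 ≤ (c i).2 ∧ pw c i ≤ 1) ∧ (∀ i, n ≤ i → c i = (0, 0))

/-- Total pebble weight of a configuration. -/
def weight (n : ℕ) (c : Cfg) : ℝ := ∑ i ∈ Finset.range n, pw c i

/-- j is a child of i in heap indexing of the d-ary tree. -/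
def child (d i j : ℕ) : Prop := ∃ k, k < d ∧ j = d * i + 1 + k

def isLeaf (d n i : ℕ) : Prop := i < n ∧ n ≤ d * i + 1

/-- Every child of i has pebble weight 1. -/
def covered (d : ℕ) (c : Cfg) (i : ℕ) : Prop := ∀ j, child d i j → pw c j = 1

/-- Legal fractional pebbling moves: decrease black weight on any node; on a node
whose children all have pebble weight 1, set its white weight to 0 and increase its
black weight arbitrarily, optionally simultaneously decreasing children's black
weights (sliding); increase white weight on any node (subject to validity);
increase black weight on any leaf. -/
def Move (d n : ℕ) (c c' : Cfg) : Prop :=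
  (∃ i, (c' i).1 ≤ (c i).1 ∧ (c' i).2 = (c i).2 ∧ ∀ j, j ≠ i → c' j = c j) ∨
  (∃ i, i < n ∧ covered d c i ∧ (c i).1 ≤ (c' i).1 ∧ (c' i).2 = 0 ∧
    (∀ j, child d i j → (c' j).1 ≤ (c j).1 ∧ (c' j).2 = (c j).2) ∧
    (∀ j, j ≠ i → ¬ child d i j → c' j = c j)) ∨
  (∃ i, (c' i).1 = (c i).1 ∧ (c i).2 ≤ (c' i).2 ∧ ∀ j, j ≠ i → c' j = c j) ∨
  (∃ i, isLeaf d n i ∧ (c' i).2 = (c i).2 ∧ (c i).1 ≤ (c' i).1 ∧ ∀ j, j ≠ i → c' j = c j)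

/-- A fractional pebbling: valid configurations connected by legal moves. -/
def Pebbling (d n T : ℕ) (c : ℕ → Cfg) : Prop :=
  (∀ t, t ≤ T → Valid n (c t)) ∧ (∀ t, t < T → Move d n (c t) (c (t + 1)))

def EmptyCfg (c : Cfg) : Prop := ∀ i, c i = (0, 0)

/-- Root-pebbling: starts and ends empty; at some time the root has pebble weight 1. -/
def RootPebbling (d n T : ℕ) (c : ℕ → Cfg) : Prop :=
  Pebbling d n T c ∧ EmptyCfg (c 0) ∧ EmptyCfg (c T) ∧ ∃ t, t ≤ T ∧ pw (c t) 0 = 1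

namespace Frac

/-! ### Configuration algebra -/

lemma pw_add (c c' : Cfg) (i : ℕ) : pw (c + c') i = pw c i + pw c' i := by
  simp only [pw, Pi.add_apply, Prod.fst_add, Prod.snd_add]; ring

lemma weight_add (n : ℕ) (c c' : Cfg) :
    weight n (c + c') = weight n c + weight n c' := by
  simp [weight, pw_add, Finset.sum_add_distrib]

lemma weight_zero (n : ℕ) : weight n (0 : Cfg) = 0 := by
  simp [weight, pw]

lemma pw_zero (i : ℕ) : pw (0 : Cfg) i = 0 := by simp [pw]

lemma valid_zero (n : ℕ) : Valid n (0 : Cfg) := by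
  constructor
  · intro i; simp [pw]
  · intro i _; rfl

lemma valid_add {n : ℕ} {c c' : Cfg} (h : Valid n c) (h' : Valid n c')
    (hdisj : ∀ i, c i = 0 ∨ c' i = 0) : Valid n (c + c') := by
  obtain ⟨h1, h2⟩ := h
  obtain ⟨h1', h2'⟩ := h'
  constructor
  · intro i
    rcases hdisj i with h0 | h0 <;>
      simp only [Pi.add_apply, h0, zero_add, add_zero, pw] at *
    · have := h1' i
      simpa [pw] using this
    · have := h1 i
      simpa [pw] using this
  · intro i hi
    have := h2 i hi
    have := h2' i hi
    simp only [Pi.add_apply, *]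
    simp [Prod.mk_zero_zero]

/-! ### Descendant relation -/

def Desc (d : ℕ) : ℕ → ℕ → Prop := Relation.ReflTransGen (child d)

lemma Desc.refl {d r : ℕ} : Desc d r r := Relation.ReflTransGen.refl

lemma Desc.trans {d a b c : ℕ} (h : Desc d a b) (h' : Desc d b c) : Desc d a c :=
  Relation.ReflTransGen.trans h h'

lemma Desc.of_child {d i j : ℕ} (h : child d i j) : Desc d i j :=
  Relation.ReflTransGen.single h

lemma child_lt {d i j : ℕ} (hd : 1 ≤ d) (h : child d i j) : i < j := by
  obtain ⟨k, hk, rfl⟩ := h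
  have : 1 * i ≤ d * i := Nat.mul_le_mul_right i hd
  omega

lemma Desc.le {d i j : ℕ} (hd : 1 ≤ d) (h : Desc d i j) : i ≤ j := by
  induction h with
  | refl => exact le_refl _
  | tail _ hc ih => exact le_of_lt (lt_of_le_of_lt ih (child_lt hd hc))

lemma child_parent_unique {d p q j : ℕ} (hd : 1 ≤ d) (h : child d p j) (h' : child d q j) :
    p = q := by
  obtain ⟨k, hk, hj⟩ := h
  obtain ⟨k', hk', hj'⟩ := h'
  have he : d * p + k = d * q + k' := by omega
  have h1 : (d * p + k) / d = p := by
    rw [Nat.mul_add_div (by omega), Nat.div_eq_of_lt hk, Nat.add_zero]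
  have h2 : (d * q + k') / d = q := by
    rw [Nat.mul_add_div (by omega), Nat.div_eq_of_lt hk', Nat.add_zero]
  rw [he] at h1
  rw [h1] at h2
  exact h2.symm ▸ rfl

lemma desc_comparable {d : ℕ} (hd : 1 ≤ d) :
    ∀ x a b, Desc d a x → Desc d b x → Desc d a b ∨ Desc d b a := by
  intro x
  induction x using Nat.strong_induction_on with
  | _ x ih =>
    intro a b ha hb
    rcases Relation.ReflTransGen.cases_tail ha with h | ⟨c, hac, hcx⟩
    · subst h; right; exact hb
    · rcases Relation.ReflTransGen.cases_tail hb with h' | ⟨c', hbc, hcx'⟩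
      · subst h'; left; exact ha
      · have hcc : c = c' := child_parent_unique hd hcx hcx'
        subst hcc
        exact ih c (child_lt hd hcx) a b hac hbc

/-- A descendant of one child is not a descendant of a different child. -/
lemma sibling_not_desc {d r u u' j : ℕ} (hd : 1 ≤ d) (hu : child d r u) (hu' : child d r u')
    (hne : u ≠ u') (h : Desc d u j) (h' : Desc d u' j) : False := by
  rcases desc_comparable hd j u u' h h' with hc | hc
  · rcases Relation.ReflTransGen.cases_tail hc with he | ⟨c, huc, hcu'⟩
    · exact hne he.symm
    · have hcr : c = r := child_parent_unique hd hcu' hu'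
      have h1 : u ≤ c := Desc.le hd huc
      have h2 : r < u := child_lt hd hu
      omega
  · rcases Relation.ReflTransGen.cases_tail hc with he | ⟨c, huc, hcu⟩
    · exact hne he
    · have hcr : c = r := child_parent_unique hd hcu hu
      have h1 : u' ≤ c := Desc.le hd huc
      have h2 : r < u' := child_lt hd hu'
      omega

lemma child_iff {d v j : ℕ} : child d v j ↔ (d*v+1 ≤ j ∧ j < d*v+1+d) := by
  constructor
  · rintro ⟨k, hk, rfl⟩; omega
  · intro h; exact ⟨j - (d*v+1), by omega, by omega⟩

/-! ### Levels -/

lemma treeSize_succ (d ℓ : ℕ) : treeSize d (ℓ+1) = d * treeSize d ℓ + 1 := by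
  unfold treeSize
  rw [Finset.sum_range_succ']
  simp [pow_succ', Finset.mul_sum]

lemma treeSize_mono (d : ℕ) {a b : ℕ} (h : a ≤ b) : treeSize d a ≤ treeSize d b := by
  unfold treeSize
  exact Finset.sum_le_sum_of_subset (Finset.range_subset_range.mpr h)

/-- v is at height γ in the tree of height h (so level h - γ). -/
def atH (d h v γ : ℕ) : Prop :=
  ∃ ℓ, ℓ + γ = h ∧ treeSize d ℓ ≤ v ∧ v < treeSize d (ℓ+1)

lemma atH_child {d h v γ k : ℕ} (hd : 1 ≤ d) (hv : atH d h v (γ+1)) (hk : k < d) :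
    atH d h (d*v+1+k) γ := by
  obtain ⟨ℓ, hℓ, h1, h2⟩ := hv
  refine ⟨ℓ+1, by omega, ?_, ?_⟩
  · rw [treeSize_succ]
    have := Nat.mul_le_mul_left d h1
    omega
  · rw [treeSize_succ, treeSize_succ]
    rw [treeSize_succ] at h2
    have hv2 : v ≤ d * treeSize d ℓ := by omega
    have h3 := Nat.mul_le_mul_left d hv2
    have h4 : d * (d * treeSize d ℓ + 1) = d * (d * treeSize d ℓ) + d := by ring
    omega

lemma atH_lt_n {d h v γ : ℕ} (hγ : 1 ≤ γ) (hv : atH d h v γ) : v < treeSize d h := by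
  obtain ⟨ℓ, hℓ, _, h2⟩ := hv
  exact lt_of_lt_of_le h2 (treeSize_mono d (by omega))

lemma atH_leaf {d h v : ℕ} (hd : 1 ≤ d) (hv : atH d h v 1) : isLeaf d (treeSize d h) v := by
  obtain ⟨ℓ, hℓ, h1, h2⟩ := hv
  constructor
  · exact lt_of_lt_of_le h2 (treeSize_mono d (by omega))
  · have : treeSize d h = d * treeSize d ℓ + 1 := by
      rw [← hℓ]; exact treeSize_succ d ℓ
    rw [this]
    have := Nat.mul_le_mul_left d h1
    omega

end Frac
namespace Frac

/-! ### Configuration shapes -/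

def sngl (i : ℕ) (val : ℝ × ℝ) : Cfg := fun j => if j = i then val else 0

def chsC (d r m : ℕ) (val : ℝ × ℝ) : Cfg :=
  fun j => if d*r+1 ≤ j ∧ j < d*r+1+m then val else 0

def chsM (d r m k : ℕ) (a b : ℝ × ℝ) : Cfg :=
  fun j => if d*r+1 ≤ j ∧ j < d*r+1+m then (if j < d*r+1+k then a else b) else 0

def chsG (d r m k : ℕ) (a b : ℝ × ℝ) : Cfg :=
  fun j => if (d*r+1 ≤ j ∧ j < d*r+1+m) ∧ j ≠ d*r+1+k then (if j < d*r+1+k then a else b) else 0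

noncomputable def pend (d : ℕ) : ℕ → ℕ → Cfg
  | 0, _ => 0
  | (p+1), r => chsC d r (d-1) (0, 1/2) + pend d p (d*r+d)

lemma sngl_self (i : ℕ) (val : ℝ × ℝ) : sngl i val i = val := by simp [sngl]

lemma sngl_ne {i j : ℕ} (h : j ≠ i) (val : ℝ × ℝ) : sngl i val j = 0 := by simp [sngl, h]

lemma chsM_zero (d r m : ℕ) (a b : ℝ × ℝ) : chsM d r m 0 a b = chsC d r m b := by
  funext j
  simp only [chsM, chsC]
  split_ifs with h1 h2
  · omega
  · rfl
  · rfl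

lemma chsM_full (d r m : ℕ) (a b : ℝ × ℝ) : chsM d r m m a b = chsC d r m a := by
  funext j
  simp only [chsM, chsC]
  split_ifs with h1 h2
  · rfl
  · omega
  · rfl

lemma chsM_eq_gap_add {d r m k : ℕ} (hk : k < m) (a b : ℝ × ℝ) :
    chsM d r m k a b = chsG d r m k a b + sngl (d*r+1+k) b := by
  funext j
  simp only [chsM, chsG, sngl, Pi.add_apply]
  split_ifs <;> (first | (exfalso; omega) | simp)

lemma chsM_succ_eq_gap_add {d r m k : ℕ} (hk : k < m) (a b : ℝ × ℝ) :
    chsM d r m (k+1) a b = chsG d r m k a b + sngl (d*r+1+k) a := by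
  funext j
  simp only [chsM, chsG, sngl, Pi.add_apply]
  split_ifs <;> (first | (exfalso; omega) | simp)

/-! ### pw evaluations -/

lemma pw_sngl (i j : ℕ) (val : ℝ × ℝ) :
    pw (sngl i val) j = if j = i then val.1 + val.2 else 0 := by
  unfold pw sngl
  split_ifs <;> simp

lemma pw_chsC (d r m j : ℕ) (val : ℝ × ℝ) :
    pw (chsC d r m val) j = if d*r+1 ≤ j ∧ j < d*r+1+m then val.1 + val.2 else 0 := by
  unfold pw chsC
  split_ifs <;> simp

lemma pw_chsM (d r m k j : ℕ) (a b : ℝ × ℝ) :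
    pw (chsM d r m k a b) j = if d*r+1 ≤ j ∧ j < d*r+1+m then
      (if j < d*r+1+k then a.1 + a.2 else b.1 + b.2) else 0 := by
  unfold pw chsM
  split_ifs <;> simp

/-! ### weights -/

lemma weight_sngl {n i : ℕ} (hi : i < n) (val : ℝ × ℝ) :
    weight n (sngl i val) = val.1 + val.2 := by
  unfold weight
  simp only [pw_sngl]
  rw [Finset.sum_ite_eq' (Finset.range n) i (fun _ => val.1 + val.2)]
  simp [hi]

lemma weight_chsC {d n r m : ℕ} (hn : d*r+1+m ≤ n) (val : ℝ × ℝ) :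
    weight n (chsC d r m val) = (m : ℝ) * (val.1 + val.2) := by
  unfold weight
  simp only [pw_chsC]
  have hsub : Finset.Ico (d*r+1) (d*r+1+m) ⊆ Finset.range n := by
    intro x hx
    simp only [Finset.mem_Ico, Finset.mem_range] at *
    omega
  rw [← Finset.sum_subset hsub (fun x _ hx => by
    simp only [Finset.mem_Ico] at hx; rw [if_neg hx])]
  rw [Finset.sum_congr rfl (fun x hx => by
    simp only [Finset.mem_Ico] at hx; rw [if_pos hx])]
  rw [Finset.sum_const, Nat.card_Ico]
  have hc : d*r+1+m - (d*r+1) = m := by omega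
  rw [hc, nsmul_eq_mul]

lemma weight_chsM {d n r m k : ℕ} (hk : k ≤ m) (hn : d*r+1+m ≤ n) (a b : ℝ × ℝ) :
    weight n (chsM d r m k a b) = (k : ℝ) * (a.1 + a.2) + ((m : ℝ) - (k:ℝ)) * (b.1 + b.2) := by
  have hsub : Finset.Ico (d*r+1) (d*r+1+m) ⊆ Finset.range n := by
    intro x hx
    simp only [Finset.mem_Ico, Finset.mem_range] at *
    omega
  have h1 : weight n (chsM d r m k a b)
      = ∑ j ∈ Finset.Ico (d*r+1) (d*r+1+m),
          (if j < d*r+1+k then a.1+a.2 else b.1+b.2) := by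
    unfold weight
    simp only [pw_chsM]
    rw [← Finset.sum_subset hsub (fun x _ hx => by
      simp only [Finset.mem_Ico] at hx; rw [if_neg hx])]
    exact Finset.sum_congr rfl (fun x hx => by
      simp only [Finset.mem_Ico] at hx; rw [if_pos hx])
  rw [h1, ← Finset.sum_Ico_consecutive _
    (by omega : d*r+1 ≤ d*r+1+k) (by omega : d*r+1+k ≤ d*r+1+m)]
  have h2 : ∑ j ∈ Finset.Ico (d*r+1) (d*r+1+k),
      (if j < d*r+1+k then a.1+a.2 else b.1+b.2) = (k:ℝ) * (a.1+a.2) := by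
    rw [Finset.sum_congr rfl (fun x hx => by
      simp only [Finset.mem_Ico] at hx; rw [if_pos (by omega)])]
    rw [Finset.sum_const, Nat.card_Ico]
    have hc : d*r+1+k - (d*r+1) = k := by omega
    rw [hc, nsmul_eq_mul]
  have h3 : ∑ j ∈ Finset.Ico (d*r+1+k) (d*r+1+m),
      (if j < d*r+1+k then a.1+a.2 else b.1+b.2) = ((m:ℝ)-(k:ℝ)) * (b.1+b.2) := by
    rw [Finset.sum_congr rfl (fun x hx => by
      simp only [Finset.mem_Ico] at hx; rw [if_neg (by omega)])]
    rw [Finset.sum_const, Nat.card_Ico]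
    have hc : d*r+1+m - (d*r+1+k) = m - k := by omega
    rw [hc, nsmul_eq_mul, Nat.cast_sub hk]
  rw [h2, h3]

end Frac
namespace Frac

/-! ### Support and validity of shapes -/

lemma not_desc_of_other_child {d r u j : ℕ} (hd : 1 ≤ d) (hu : child d r u)
    (hj : child d r j) (hne : j ≠ u) : ¬ Desc d u j :=
  fun h => sibling_not_desc hd hu hj hne.symm h Desc.refl

lemma cast_dm1 {d : ℕ} (hd : 1 ≤ d) : ((d-1 : ℕ) : ℝ) = (d:ℝ) - 1 := by
  have := Nat.cast_sub (R := ℝ) hd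
  simpa using this

lemma valid_sngl {n i : ℕ} (hi : i < n) {val : ℝ × ℝ}
    (h1 : 0 ≤ val.1) (h2 : 0 ≤ val.2) (h3 : val.1 + val.2 ≤ 1) : Valid n (sngl i val) := by
  constructor
  · intro j
    unfold pw sngl
    split_ifs <;> simp_all
  · intro j hj
    rw [sngl_ne (by omega), Prod.mk_zero_zero]

lemma valid_chsC {d n r m : ℕ} (hn : d*r+1+m ≤ n) {val : ℝ × ℝ}
    (h1 : 0 ≤ val.1) (h2 : 0 ≤ val.2) (h3 : val.1 + val.2 ≤ 1) : Valid n (chsC d r m val) := by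
  constructor
  · intro j
    unfold pw chsC
    split_ifs <;> simp_all
  · intro j hj
    unfold chsC
    rw [if_neg (by omega), Prod.mk_zero_zero]

lemma valid_chsM {d n r m k : ℕ} (hn : d*r+1+m ≤ n) {a b : ℝ × ℝ}
    (ha1 : 0 ≤ a.1) (ha2 : 0 ≤ a.2) (ha3 : a.1 + a.2 ≤ 1)
    (hb1 : 0 ≤ b.1) (hb2 : 0 ≤ b.2) (hb3 : b.1 + b.2 ≤ 1) : Valid n (chsM d r m k a b) := by
  constructor
  · intro j
    unfold pw chsM
    split_ifs <;> simp_all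
  · intro j hj
    unfold chsM
    rw [if_neg (by omega), Prod.mk_zero_zero]

lemma valid_chsG {d n r m k : ℕ} (hn : d*r+1+m ≤ n) {a b : ℝ × ℝ}
    (ha1 : 0 ≤ a.1) (ha2 : 0 ≤ a.2) (ha3 : a.1 + a.2 ≤ 1)
    (hb1 : 0 ≤ b.1) (hb2 : 0 ≤ b.2) (hb3 : b.1 + b.2 ≤ 1) : Valid n (chsG d r m k a b) := by
  constructor
  · intro j
    unfold pw chsG
    split_ifs <;> simp_all
  · intro j hj
    unfold chsG
    rw [if_neg (by omega), Prod.mk_zero_zero]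

/-- support of chsC within children of r -/
lemma chsC_desc {d r m : ℕ} (hd : 1 ≤ d) (hm : m ≤ d) {j : ℕ} (val : ℝ × ℝ)
    (hj : chsC d r m val j ≠ 0) : child d r j := by
  unfold chsC at hj
  by_cases hc : d*r+1 ≤ j ∧ j < d*r+1+m
  · exact child_iff.mpr ⟨hc.1, by omega⟩
  · rw [if_neg hc] at hj; exact absurd rfl hj

lemma chsM_desc {d r m k : ℕ} (hd : 1 ≤ d) (hm : m ≤ d) {j : ℕ} (a b : ℝ × ℝ)
    (hj : chsM d r m k a b j ≠ 0) : child d r j := by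
  unfold chsM at hj
  by_cases hc : d*r+1 ≤ j ∧ j < d*r+1+m
  · exact child_iff.mpr ⟨hc.1, by omega⟩
  · rw [if_neg hc] at hj; exact absurd rfl hj

lemma chsG_desc {d r m k : ℕ} (hd : 1 ≤ d) (hm : m ≤ d) {j : ℕ} (a b : ℝ × ℝ)
    (hj : chsG d r m k a b j ≠ 0) : child d r j ∧ j ≠ d*r+1+k := by
  unfold chsG at hj
  by_cases hc : (d*r+1 ≤ j ∧ j < d*r+1+m) ∧ j ≠ d*r+1+k
  · exact ⟨child_iff.mpr ⟨hc.1.1, by omega⟩, hc.2⟩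
  · rw [if_neg hc] at hj; exact absurd rfl hj

/-! ### pend lemmas -/

lemma pend_ne {d : ℕ} (hd : 1 ≤ d) :
    ∀ p r j, pend d p r j ≠ 0 → Desc d r j ∧ r < j := by
  intro p
  induction p with
  | zero => intro r j hj; exact absurd rfl hj
  | succ p ih =>
    intro r j hj
    unfold pend at hj
    rw [Pi.add_apply] at hj
    by_cases h1 : chsC d r (d-1) (0, 1/2) j = 0
    · rw [h1, zero_add] at hj
      obtain ⟨hdesc, hlt⟩ := ih (d*r+d) j hj
      have hch : child d r (d*r+d) := ⟨d-1, by omega, by omega⟩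
      have hrr : r ≤ d*r := Nat.le_mul_of_pos_left r (by omega)
      exact ⟨(Desc.of_child hch).trans hdesc, by omega⟩
    · have hch := chsC_desc hd (by omega) _ h1
      exact ⟨Desc.of_child hch, child_lt hd hch⟩

lemma pend_zero {d : ℕ} (hd : 1 ≤ d) {p r j : ℕ} (hj : ¬ Desc d r j ∨ j ≤ r) :
    pend d p r j = 0 := by
  by_contra hne
  obtain ⟨h1, h2⟩ := pend_ne hd p r j hne
  rcases hj with hj | hj
  · exact hj h1
  · omega

lemma pend_valid {d h : ℕ} (hd : 2 ≤ d) :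
    ∀ p r γ, atH d h r (γ+1) → p ≤ γ → Valid (treeSize d h) (pend d p r) := by
  intro p
  induction p with
  | zero => intro r γ _ _; exact valid_zero _
  | succ p ih =>
    intro r γ hr hp
    have hγ : 1 ≤ γ := by omega
    obtain ⟨γ', rfl⟩ : ∃ γ', γ = γ' + 1 := ⟨γ - 1, by omega⟩
    have hc2 : atH d h (d*r+1+(d-2)) (γ'+1) := atH_child (by omega) hr (by omega)
    have hbound : d*r+1+(d-1) ≤ treeSize d h := by
      have := atH_lt_n (by omega) hc2
      omega
    have hlast : atH d h (d*r+d) (γ'+1) := by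
      have := atH_child (k := d-1) (by omega) hr (by omega)
      have he : d*r+1+(d-1) = d*r+d := by omega
      rwa [he] at this
    unfold pend
    apply valid_add
    · exact valid_chsC hbound (by norm_num) (by norm_num) (by norm_num)
    · exact ih (d*r+d) γ' hlast (by omega)
    · intro i
      by_cases h1 : chsC d r (d-1) ((0:ℝ), (1:ℝ)/2) i = 0
      · left; exact h1
      · right
        have := chsC_desc (by omega) (by omega) _ h1
        obtain ⟨k, hk, rfl⟩ := this
        apply pend_zero (by omega)
        right
        -- need : d*r+1+k ≤ d*r+d, but also chsC nonzero means k < d-1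
        have : d*r+1 ≤ d*r+1+k ∧ d*r+1+k < d*r+1+(d-1) := by
          by_contra hcon
          unfold chsC at h1
          rw [if_neg (by omega)] at h1
          exact h1 rfl
        omega

lemma pend_weight {d h : ℕ} (hd : 2 ≤ d) :
    ∀ p r γ, atH d h r (γ+1) → p ≤ γ →
      weight (treeSize d h) (pend d p r) = (p:ℝ) * ((d:ℝ)-1) / 2 := by
  intro p
  induction p with
  | zero => intro r γ _ _; simp [pend, weight_zero]
  | succ p ih =>
    intro r γ hr hp
    have hγ : 1 ≤ γ := by omega
    obtain ⟨γ', rfl⟩ : ∃ γ', γ = γ' + 1 := ⟨γ - 1, by omega⟩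
    have hc2 : atH d h (d*r+1+(d-2)) (γ'+1) := atH_child (by omega) hr (by omega)
    have hbound : d*r+1+(d-1) ≤ treeSize d h := by
      have := atH_lt_n (by omega) hc2
      omega
    have hlast : atH d h (d*r+d) (γ'+1) := by
      have := atH_child (k := d-1) (by omega) hr (by omega)
      have he : d*r+1+(d-1) = d*r+d := by omega
      rwa [he] at this
    unfold pend
    rw [weight_add, weight_chsC hbound, ih (d*r+d) γ' hlast (by omega), cast_dm1 (by omega)]
    push_cast
    ring

end Frac
namespace Frac

/-! ### Localized strategies -/

def Strat (d n r : ℕ) (X Y : Cfg) (P : ℝ) : Prop :=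
  ∀ ctx : Cfg, Valid n ctx → (∀ j, Desc d r j → ctx j = 0) →
    ∃ (T : ℕ) (cs : ℕ → Cfg), cs 0 = ctx + X ∧ cs T = ctx + Y ∧
      (∀ t, t < T → Move d n (cs t) (cs (t+1))) ∧
      (∀ t, t ≤ T → Valid n (cs t) ∧ weight n (cs t) ≤ weight n ctx + P ∧
        ∀ j, ¬ Desc d r j → cs t j = ctx j)

lemma Strat.mono {d n r : ℕ} {X Y : Cfg} {P P' : ℝ} (hP : P ≤ P')
    (h : Strat d n r X Y P) : Strat d n r X Y P' := by
  intro ctx hv hz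
  obtain ⟨T, cs, e0, e1, mm, bb⟩ := h ctx hv hz
  exact ⟨T, cs, e0, e1, mm, fun t ht =>
    ⟨(bb t ht).1, le_trans (bb t ht).2.1 (by linarith), (bb t ht).2.2⟩⟩

lemma Strat.trans {d n r : ℕ} {X Y Z : Cfg} {P : ℝ}
    (h1 : Strat d n r X Y P) (h2 : Strat d n r Y Z P) : Strat d n r X Z P := by
  intro ctx hv hz
  obtain ⟨T1, cs1, e10, e11, m1, b1⟩ := h1 ctx hv hz
  obtain ⟨T2, cs2, e20, e21, m2, b2⟩ := h2 ctx hv hz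
  refine ⟨T1 + T2, fun t => if t < T1 then cs1 t else cs2 (t - T1), ?_, ?_, ?_, ?_⟩
  · by_cases h : 0 < T1
    · simp only [if_pos h]; exact e10
    · have hT : T1 = 0 := by omega
      have e11' : cs1 0 = ctx + Y := by rw [← hT]; exact e11
      have hXY : ctx + Y = ctx + X := by rw [← e10, ← e11']
      simp only [if_neg h]
      rw [Nat.zero_sub, e20, hXY]
  · have h : ¬ (T1 + T2 < T1) := by omega
    simp only [if_neg h]
    have he : T1 + T2 - T1 = T2 := by omega
    rw [he, e21]
  · intro t ht
    by_cases h1t : t + 1 < T1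
    · have h0 : t < T1 := by omega
      simp only [if_pos h1t, if_pos h0]
      exact m1 t (by omega)
    · by_cases h2t : t < T1
      · have he : t + 1 = T1 := by omega
        simp only [if_pos h2t, if_neg h1t]
        have hcs : cs2 (t + 1 - T1) = cs1 (t+1) := by
          rw [he, Nat.sub_self, e20]
          exact e11.symm
        rw [hcs]
        exact m1 t (by omega)
      · simp only [if_neg h1t, if_neg h2t]
        have h3 : t - T1 < T2 := by omega
        have he : t + 1 - T1 = (t - T1) + 1 := by omega
        rw [he]
        exact m2 (t - T1) h3
  · intro t ht
    by_cases h1t : t < T1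
    · simp only [if_pos h1t]; exact b1 t (by omega)
    · simp only [if_neg h1t]; exact b2 (t - T1) (by omega)

lemma Strat.refl' {d n r : ℕ} {X : Cfg} {P : ℝ}
    (hsupp : ∀ j, ¬ Desc d r j → X j = 0) (hX : Valid n X) (hw : weight n X ≤ P) :
    Strat d n r X X P := by
  intro ctx hv hz
  refine ⟨0, fun _ => ctx + X, rfl, rfl, fun t ht => absurd ht (by omega), ?_⟩
  intro t _
  refine ⟨valid_add hv hX ?_, ?_, ?_⟩
  · intro i
    by_cases hD : Desc d r i
    · exact Or.inl (hz i hD)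
    · exact Or.inr (hsupp i hD)
  · rw [weight_add]; linarith
  · intro j hj
    simp [Pi.add_apply, hsupp j hj]

lemma Strat.lift {d n r u : ℕ} (hru : Desc d r u) (Z : Cfg)
    (hZr : ∀ j, ¬ Desc d r j → Z j = 0)
    (hZu : ∀ j, Desc d u j → Z j = 0)
    (hZv : Valid n Z) {X Y : Cfg} {P : ℝ}
    (h : Strat d n u X Y P) :
    Strat d n r (Z + X) (Z + Y) (weight n Z + P) := by
  intro ctx hv hz
  have hv' : Valid n (ctx + Z) := valid_add hv hZv (fun i => by
    by_cases hD : Desc d r i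
    · exact Or.inl (hz i hD)
    · exact Or.inr (hZr i hD))
  have hz' : ∀ j, Desc d u j → (ctx + Z) j = 0 := fun j hj => by
    have h1 : Desc d r j := hru.trans hj
    simp [Pi.add_apply, hz j h1, hZu j hj]
  obtain ⟨T, cs, e0, e1, mm, bb⟩ := h (ctx + Z) hv' hz'
  refine ⟨T, cs, ?_, ?_, mm, ?_⟩
  · rw [e0, add_assoc]
  · rw [e1, add_assoc]
  · intro t ht
    obtain ⟨hval, hwt, hfr⟩ := bb t ht
    refine ⟨hval, ?_, ?_⟩
    · rw [weight_add] at hwt; linarith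
    · intro j hj
      have hju : ¬ Desc d u j := fun hc => hj (hru.trans hc)
      rw [hfr j hju, Pi.add_apply, hZr j hj, add_zero]

lemma Strat.single {d n r : ℕ} {X Y : Cfg} {P : ℝ}
    (hXs : ∀ j, ¬ Desc d r j → X j = 0) (hYs : ∀ j, ¬ Desc d r j → Y j = 0)
    (hXv : Valid n X) (hYv : Valid n Y)
    (hwX : weight n X ≤ P) (hwY : weight n Y ≤ P)
    (hm : ∀ ctx : Cfg, Valid n ctx → (∀ j, Desc d r j → ctx j = 0) →
        Move d n (ctx + X) (ctx + Y)) :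
    Strat d n r X Y P := by
  intro ctx hv hz
  have hcomb : ∀ (W : Cfg), (∀ j, ¬ Desc d r j → W j = 0) → Valid n W → weight n W ≤ P →
      Valid n (ctx + W) ∧ weight n (ctx + W) ≤ weight n ctx + P ∧
        ∀ j, ¬ Desc d r j → (ctx + W) j = ctx j := by
    intro W hWs hWv hwW
    refine ⟨valid_add hv hWv (fun i => by
      by_cases hD : Desc d r i
      · exact Or.inl (hz i hD)
      · exact Or.inr (hWs i hD)), ?_, ?_⟩
    · rw [weight_add]; linarith
    · intro j hj
      simp [Pi.add_apply, hWs j hj]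
  refine ⟨1, fun t => if t = 0 then ctx + X else ctx + Y, by simp, by simp, ?_, ?_⟩
  · intro t ht
    have h0 : t = 0 := by omega
    subst h0
    simpa using hm ctx hv hz
  · intro t _
    by_cases h0 : t = 0
    · subst h0
      simpa using hcomb X hXs hXv hwX
    · simp only [if_neg h0]
      exact hcomb Y hYs hYv hwY

end Frac
namespace Frac

lemma chsC_in {d r m j : ℕ} (h : d*r+1 ≤ j ∧ j < d*r+1+m) (val : ℝ × ℝ) :
    chsC d r m val j = val := by unfold chsC; rw [if_pos h]

lemma chsC_out {d r m j : ℕ} (h : ¬(d*r+1 ≤ j ∧ j < d*r+1+m)) (val : ℝ × ℝ) :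
    chsC d r m val j = 0 := by unfold chsC; rw [if_neg h]

lemma v_le_dv {d v : ℕ} (hd : 1 ≤ d) : v ≤ d*v := Nat.le_mul_of_pos_left v (by omega)

lemma child_lastc {d v : ℕ} (hd : 1 ≤ d) : child d v (d*v+d) := ⟨d-1, by omega, by omega⟩

lemma ne_of_not_desc {d r j : ℕ} (hj : ¬ Desc d r j) : j ≠ r :=
  fun he => hj (by rw [he]; exact Desc.refl)

/-- Place white on a node (Move 3). -/
lemma whiteStrat {d n r : ℕ} (hr : r < n) (A A' : ℝ × ℝ) (P : ℝ)
    (h1 : A'.1 = A.1) (h2 : A.2 ≤ A'.2)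
    (hA1 : 0 ≤ A.1) (hA2 : 0 ≤ A.2)
    (hs' : A'.1 + A'.2 ≤ 1)
    (hP : A'.1 + A'.2 ≤ P) :
    Strat d n r (sngl r A) (sngl r A') P := by
  have hA1' : 0 ≤ A'.1 := h1 ▸ hA1
  have hA2' : 0 ≤ A'.2 := le_trans hA2 h2
  have hsA : A.1 + A.2 ≤ A'.1 + A'.2 := by rw [h1]; linarith
  apply Strat.single
  · intro j hj; exact sngl_ne (ne_of_not_desc hj) _
  · intro j hj; exact sngl_ne (ne_of_not_desc hj) _
  · exact valid_sngl hr hA1 hA2 (le_trans hsA hs')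
  · exact valid_sngl hr hA1' hA2' hs'
  · rw [weight_sngl hr]; linarith
  · rw [weight_sngl hr]; exact hP
  · intro ctx hv hz
    right; right; left
    refine ⟨r, ?_, ?_, ?_⟩
    · simp only [Pi.add_apply, Prod.fst_add, sngl_self, h1]
    · simp only [Pi.add_apply, Prod.snd_add, sngl_self]
      linarith
    · intro j hj
      simp only [Pi.add_apply, sngl_ne hj]

/-- Place black on a leaf (Move 4). -/
lemma leafStrat {d n r : ℕ} (hleaf : isLeaf d n r) (A A' : ℝ × ℝ) (P : ℝ)
    (h1 : A'.2 = A.2) (h2 : A.1 ≤ A'.1)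
    (hA1 : 0 ≤ A.1) (hA2 : 0 ≤ A.2)
    (hs' : A'.1 + A'.2 ≤ 1)
    (hP : A'.1 + A'.2 ≤ P) :
    Strat d n r (sngl r A) (sngl r A') P := by
  have hr : r < n := hleaf.1
  have hA2' : 0 ≤ A'.2 := h1 ▸ hA2
  have hA1' : 0 ≤ A'.1 := le_trans hA1 h2
  have hsA : A.1 + A.2 ≤ A'.1 + A'.2 := by rw [h1]; linarith
  apply Strat.single
  · intro j hj; exact sngl_ne (ne_of_not_desc hj) _
  · intro j hj; exact sngl_ne (ne_of_not_desc hj) _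
  · exact valid_sngl hr hA1 hA2 (le_trans hsA hs')
  · exact valid_sngl hr hA1' hA2' hs'
  · rw [weight_sngl hr]; linarith
  · rw [weight_sngl hr]; exact hP
  · intro ctx hv hz
    right; right; right
    refine ⟨r, hleaf, ?_, ?_, ?_⟩
    · simp only [Pi.add_apply, Prod.snd_add, sngl_self, h1]
    · simp only [Pi.add_apply, Prod.fst_add, sngl_self]
      linarith
    · intro j hj
      simp only [Pi.add_apply, sngl_ne hj]

/-- The cover move (Move 2) at node v, with all d children at pebble weight 1. -/
lemma coverStrat {d n v : ℕ} (hd : 2 ≤ d) (hvn : v < n) (hcn : d*v+d < n)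
    (W : Cfg) (hWs : ∀ j, ¬ Desc d v j → W j = 0) (hWv : Valid n W)
    (hWv0 : W v = 0) (hWch : ∀ k, k < d → W (d*v+1+k) = 0)
    (b₀ w₀ B β ω βd ωd : ℝ)
    (hβω : β + ω = 1) (hβωd : βd + ωd = 1)
    (h0B : b₀ ≤ B) (hB0 : 0 ≤ B) (hB1 : B ≤ 1)
    (hb₀ : 0 ≤ b₀) (hw₀ : 0 ≤ w₀) (hbw : b₀ + w₀ ≤ 1)
    (hβ : 0 ≤ β) (hω : 0 ≤ ω) (hβd : 0 ≤ βd) (hωd : 0 ≤ ωd)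
    (P : ℝ)
    (hP1 : weight n W + (b₀+w₀) + ((d:ℝ)-1) + 1 ≤ P)
    (hP2 : weight n W + B + ((d:ℝ)-1)*ω + ωd ≤ P) :
    Strat d n v (W + sngl v (b₀,w₀) + chsC d v (d-1) (β,ω) + sngl (d*v+d) (βd,ωd))
                (W + sngl v (B,(0:ℝ)) + chsC d v (d-1) ((0:ℝ),ω) + sngl (d*v+d) ((0:ℝ),ωd)) P := by
  have hω1 : ω ≤ 1 := by linarith
  have hωd1 : ωd ≤ 1 := by linarith
  have hβ1 : β ≤ 1 := by linarith
  have hβd1 : βd ≤ 1 := by linarith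
  have hvlo : v < d*v+1 := by have := v_le_dv (d := d) (v := v) (by omega); omega
  have hlastc : child d v (d*v+d) := child_lastc (by omega)
  have hchn : d*v+1+(d-1) ≤ n := by omega
  -- support lemmas
  have hsupp : ∀ (s1 : ℝ×ℝ) (c2 : ℝ×ℝ) (s3 : ℝ×ℝ), ∀ j, ¬ Desc d v j →
      (W + sngl v s1 + chsC d v (d-1) c2 + sngl (d*v+d) s3) j = 0 := by
    intro s1 c2 s3 j hj
    have h1 : W j = 0 := hWs j hj
    have h2 : sngl v s1 j = 0 := sngl_ne (ne_of_not_desc hj) _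
    have h3 : chsC d v (d-1) c2 j = 0 := by
      by_contra hc
      exact hj (Desc.of_child (chsC_desc (by omega) (by omega) _ hc))
    have h4 : sngl (d*v+d) s3 j = 0 := by
      apply sngl_ne
      intro he
      exact hj (by rw [he]; exact Desc.of_child hlastc)
    simp only [Pi.add_apply, h1, h2, h3, h4, add_zero]
  -- validity of such shapes
  have hvalid : ∀ (s1 c2 s3 : ℝ×ℝ),
      (0 ≤ s1.1) → (0 ≤ s1.2) → (s1.1+s1.2 ≤ 1) →
      (0 ≤ c2.1) → (0 ≤ c2.2) → (c2.1+c2.2 ≤ 1) →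
      (0 ≤ s3.1) → (0 ≤ s3.2) → (s3.1+s3.2 ≤ 1) →
      Valid n (W + sngl v s1 + chsC d v (d-1) c2 + sngl (d*v+d) s3) := by
    intro s1 c2 s3 a1 a2 a3 b1 b2 b3 c1 c2' c3
    apply valid_add
    · apply valid_add
      · apply valid_add hWv (valid_sngl hvn a1 a2 a3)
        intro i
        by_cases hi : i = v
        · subst hi; exact Or.inl hWv0
        · exact Or.inr (sngl_ne hi _)
      · exact valid_chsC hchn b1 b2 b3
      · intro i
        by_cases hi : chsC d v (d-1) c2 i = 0
        · exact Or.inr hi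
        · left
          have hch := chsC_desc (d := d) (by omega) (by omega) _ hi
          obtain ⟨k, hk, rfl⟩ := hch
          have hiv : d*v+1+k ≠ v := by omega
          have hW0 : W (d*v+1+k) = 0 := hWch k hk
          simp only [Pi.add_apply, hW0, sngl_ne hiv, add_zero]
    · exact valid_sngl (by omega) c1 c2' c3
    · intro i
      by_cases hi : i = d*v+d
      · subst hi
        left
        have hW0 : W (d*v+1+(d-1)) = 0 := hWch (d-1) (by omega)
        have he : d*v+1+(d-1) = d*v+d := by omega
        rw [he] at hW0
        have h2 : sngl v (s1) (d*v+d) = 0 := sngl_ne (by omega) _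
        have h3 : chsC d v (d-1) c2 (d*v+d) = 0 := chsC_out (by omega) _
        simp only [Pi.add_apply, hW0, h2, h3, add_zero]
      · exact Or.inr (sngl_ne hi _)
  -- weights of such shapes
  have hweight : ∀ (s1 c2 s3 : ℝ×ℝ),
      weight n (W + sngl v s1 + chsC d v (d-1) c2 + sngl (d*v+d) s3)
        = weight n W + (s1.1+s1.2) + ((d:ℝ)-1)*(c2.1+c2.2) + (s3.1+s3.2) := by
    intro s1 c2 s3
    rw [weight_add, weight_add, weight_add, weight_sngl hvn, weight_sngl (by omega : d*v+d < n),
      weight_chsC hchn, cast_dm1 (by omega : 1 ≤ d)]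
  apply Strat.single
  · exact hsupp _ _ _
  · exact hsupp _ _ _
  · exact hvalid _ _ _ hb₀ hw₀ hbw hβ hω (by linarith) hβd hωd (by linarith)
  · exact hvalid _ _ _ hB0 (le_refl 0) (by simpa using hB1) (le_refl 0) hω (by simpa using hω1)
      (le_refl 0) hωd (by simpa using hωd1)
  · rw [hweight]; simp only []
    calc weight n W + (b₀+w₀) + ((d:ℝ)-1)*(β+ω) + (βd+ωd)
        = weight n W + (b₀+w₀) + ((d:ℝ)-1) + 1 := by rw [hβω, hβωd]; ring
      _ ≤ P := hP1
  · rw [hweight]; simp only []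
    calc weight n W + (B+0) + ((d:ℝ)-1)*(0+ω) + (0+ωd)
        = weight n W + B + ((d:ℝ)-1)*ω + ωd := by ring
      _ ≤ P := hP2
  · intro ctx hv hz
    -- evaluation helpers
    have hctx_v : ctx v = 0 := hz v Desc.refl
    have hctx_ch : ∀ k, k < d → ctx (d*v+1+k) = 0 := fun k hk =>
      hz _ (Desc.of_child ⟨k, hk, rfl⟩)
    have heval : ∀ (s1 c2 s3 : ℝ×ℝ) (k : ℕ), k < d →
        (ctx + (W + sngl v s1 + chsC d v (d-1) c2 + sngl (d*v+d) s3)) (d*v+1+k)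
          = (if k < d-1 then c2 else s3) := by
      intro s1 c2 s3 k hk
      have h0 : ctx (d*v+1+k) = 0 := hctx_ch k hk
      have h1 : W (d*v+1+k) = 0 := hWch k hk
      have h2 : sngl v s1 (d*v+1+k) = 0 := sngl_ne (by omega) _
      by_cases hkd : k < d-1
      · have h3 : chsC d v (d-1) c2 (d*v+1+k) = c2 := chsC_in ⟨by omega, by omega⟩ _
        have h4 : sngl (d*v+d) s3 (d*v+1+k) = 0 := sngl_ne (by omega) _
        simp only [Pi.add_apply, h0, h1, h2, h3, h4, if_pos hkd, zero_add, add_zero]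
      · have hke : k = d-1 := by omega
        have h3 : chsC d v (d-1) c2 (d*v+1+k) = 0 := chsC_out (by omega) _
        have h4 : sngl (d*v+d) s3 (d*v+1+k) = s3 := by
          have he : d*v+1+k = d*v+d := by omega
          rw [he]; exact sngl_self _ _
        simp only [Pi.add_apply, h0, h1, h2, h3, h4, if_neg hkd, zero_add, add_zero]
    have heval_v : ∀ (s1 c2 s3 : ℝ×ℝ),
        (ctx + (W + sngl v s1 + chsC d v (d-1) c2 + sngl (d*v+d) s3)) v = s1 := by
      intro s1 c2 s3
      have h3 : chsC d v (d-1) c2 v = 0 := chsC_out (by omega) _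
      have h4 : sngl (d*v+d) s3 v = 0 := sngl_ne (by omega) _
      simp only [Pi.add_apply, hctx_v, hWv0, sngl_self, h3, h4, zero_add, add_zero]
    right; left
    refine ⟨v, hvn, ?_, ?_, ?_, ?_, ?_⟩
    · -- covered
      intro j hch
      obtain ⟨k, hk, rfl⟩ := hch
      rw [pw]
      rw [heval _ _ _ k hk]
      by_cases hkd : k < d-1
      · rw [if_pos hkd]; exact hβω
      · rw [if_neg hkd]; exact hβωd
    · rw [heval_v, heval_v]; exact h0B
    · rw [heval_v]
    · intro j hch
      obtain ⟨k, hk, rfl⟩ := hch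
      rw [heval _ _ _ k hk, heval _ _ _ k hk]
      by_cases hkd : k < d-1
      · rw [if_pos hkd, if_pos hkd]
        constructor
        · exact hβ
        · rfl
      · rw [if_neg hkd, if_neg hkd]
        constructor
        · exact hβd
        · rfl
    · intro j hjv hjch
      have h2 : sngl v (b₀,w₀) j = 0 := sngl_ne hjv _
      have h2' : sngl v (B,(0:ℝ)) j = 0 := sngl_ne hjv _
      have hjl : j ≠ d*v+d := fun he => hjch (he ▸ hlastc)
      have h4 : sngl (d*v+d) (βd,ωd) j = 0 := sngl_ne hjl _
      have h4' : sngl (d*v+d) ((0:ℝ),ωd) j = 0 := sngl_ne hjl _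
      have hout : ¬ (d*v+1 ≤ j ∧ j < d*v+1+(d-1)) := by
        intro hin
        exact hjch ⟨j - (d*v+1), by omega, by omega⟩
      have h3 : chsC d v (d-1) (β,ω) j = 0 := chsC_out hout _
      have h3' : chsC d v (d-1) ((0:ℝ),ω) j = 0 := chsC_out hout _
      simp only [Pi.add_apply, h2, h2', h3, h3', h4, h4', add_zero]

end Frac
namespace Frac

/-- Sequentially transform the first m children of v from state y to state x. -/
lemma seqSibs {d n v m : ℕ} (hd : 2 ≤ d) (hm1 : 1 ≤ m) (hmd : m ≤ d) (hchn : d*v+1+m ≤ n)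
    (W : Cfg) (hWs : ∀ j, ¬ Desc d v j → W j = 0) (hWv : Valid n W)
    (hWch : ∀ k, k < m → ∀ j, Desc d (d*v+1+k) j → W j = 0)
    (x y : ℝ × ℝ)
    (hx1 : 0 ≤ x.1) (hx2 : 0 ≤ x.2) (hx3 : x.1+x.2 ≤ 1)
    (hy1 : 0 ≤ y.1) (hy2 : 0 ≤ y.2) (hy3 : y.1+y.2 ≤ 1)
    (Q P : ℝ) (hyQ : y.1+y.2 ≤ Q)
    (sub : ∀ k, k < m → Strat d n (d*v+1+k) (sngl (d*v+1+k) y) (sngl (d*v+1+k) x) Q)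
    (hpk : ∀ k : ℕ, k < m →
      weight n W + (k:ℝ)*(x.1+x.2) + ((m:ℝ)-1-(k:ℝ))*(y.1+y.2) + Q ≤ P) :
    Strat d n v (W + chsC d v m y) (W + chsC d v m x) P := by
  have hZs : ∀ (a b : ℝ×ℝ) (k : ℕ), ∀ j, ¬ Desc d v j → (W + chsG d v m k a b) j = 0 := by
    intro a b k j hj
    have h1 : W j = 0 := hWs j hj
    have h2 : chsG d v m k a b j = 0 := by
      by_contra hc
      exact hj (Desc.of_child (chsG_desc (by omega) hmd _ _ hc).1)
    simp only [Pi.add_apply, h1, h2, add_zero]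
  have hWzero_on_ch : ∀ k, k < m → W (d*v+1+k) = 0 := fun k hk =>
    hWch k hk _ Desc.refl
  have key : ∀ k, k ≤ m → Strat d n v (W + chsC d v m y) (W + chsM d v m k x y) P := by
    intro k
    induction k with
    | zero =>
      intro _
      rw [chsM_zero]
      apply Strat.refl'
      · intro j hj
        have h1 : W j = 0 := hWs j hj
        have h2 : chsC d v m y j = 0 := by
          by_contra hc
          exact hj (Desc.of_child (chsC_desc (by omega) hmd _ hc))
        simp only [Pi.add_apply, h1, h2, add_zero]
      · apply valid_add hWv (valid_chsC hchn hy1 hy2 hy3)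
        intro i
        by_cases hc : chsC d v m y i = 0
        · exact Or.inr hc
        · left
          have := chsC_desc (d := d) (by omega) hmd _ hc
          obtain ⟨k', hk', rfl⟩ := this
          have hk'm : k' < m := by
            by_contra hcon
            exact hc (chsC_out (by omega) _)
          exact hWzero_on_ch k' hk'm
      · rw [weight_add, weight_chsC hchn]
        have h0 := hpk 0 (by omega)
        have hm1' : (1:ℝ) ≤ (m:ℝ) := by exact_mod_cast hm1
        push_cast at h0
        nlinarith [hyQ]
    | succ k ih =>
      intro hk1
      have hk : k < m := by omega
      have hchk : child d v (d*v+1+k) := ⟨k, by omega, rfl⟩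
      have hz1 : ∀ j, Desc d (d*v+1+k) j → (W + chsG d v m k x y) j = 0 := by
        intro j hj
        have h1 : W j = 0 := hWch k hk j hj
        have h2 : chsG d v m k x y j = 0 := by
          by_contra hc
          obtain ⟨hcj, hne⟩ := chsG_desc (by omega) hmd _ _ hc
          exact not_desc_of_other_child (by omega) hchk hcj hne hj
        simp only [Pi.add_apply, h1, h2, add_zero]
      have hz2 : ∀ i, W i = 0 ∨ chsG d v m k x y i = 0 := by
        intro i
        by_cases hc : chsG d v m k x y i = 0
        · exact Or.inr hc
        · left
          obtain ⟨hcj, hne⟩ := chsG_desc (d := d) (by omega) hmd _ _ hc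
          obtain ⟨k', hk', rfl⟩ := hcj
          have hk'm : k' < m := by
            by_contra hcon
            apply hc
            unfold chsG
            rw [if_neg (by omega)]
          exact hWzero_on_ch k' hk'm
      have hlift := Strat.lift (n := n) (Desc.of_child hchk) (W + chsG d v m k x y)
        (hZs x y k) hz1
        (valid_add hWv (valid_chsG hchn hx1 hx2 hx3 hy1 hy2 hy3) hz2)
        (sub k hk)
      -- rewrite the endpoints of hlift
      have e1 : W + chsG d v m k x y + sngl (d*v+1+k) y = W + chsM d v m k x y := by
        rw [chsM_eq_gap_add hk x y]
        exact add_assoc _ _ _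
      have e2 : W + chsG d v m k x y + sngl (d*v+1+k) x = W + chsM d v m (k+1) x y := by
        rw [chsM_succ_eq_gap_add hk x y]
        exact add_assoc _ _ _
      rw [e1, e2] at hlift
      have hwZ : weight n (W + chsG d v m k x y)
          = weight n W + ((k:ℝ)*(x.1+x.2) + ((m:ℝ)-1-(k:ℝ))*(y.1+y.2)) := by
        have hsum : weight n (chsM d v m k x y)
            = weight n (chsG d v m k x y) + weight n (sngl (d*v+1+k) y) := by
          rw [chsM_eq_gap_add hk, weight_add]
        rw [weight_chsM (by omega) hchn, weight_sngl (by omega)] at hsum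
        rw [weight_add]
        have : weight n (chsG d v m k x y)
            = (k:ℝ)*(x.1+x.2) + ((m:ℝ)-(k:ℝ))*(y.1+y.2) - (y.1+y.2) := by linarith
        rw [this]; ring
      apply Strat.trans (ih (by omega))
      apply Strat.mono _ hlift
      rw [hwZ]
      have := hpk k hk
      linarith
  have hfin := key m (le_refl m)
  rwa [chsM_full] at hfin

end Frac
namespace Frac

lemma sngl_zero (i : ℕ) : sngl i (0 : ℝ×ℝ) = 0 := by
  funext j; unfold sngl; split_ifs <;> rfl

lemma chsC_zero_val (d v m : ℕ) : chsC d v m (0 : ℝ×ℝ) = 0 := by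
  funext j; unfold chsC; split_ifs <;> rfl

lemma pend_succ (d p r : ℕ) :
    pend d (p+1) r = chsC d r (d-1) ((0:ℝ), (1:ℝ)/2) + pend d p (d*r+d) := rfl

lemma pend_zero_len (d r : ℕ) : pend d 0 r = 0 := rfl

lemma chsC_split_last {d v : ℕ} (hd : 1 ≤ d) (val : ℝ×ℝ) :
    chsC d v d val = chsC d v (d-1) val + sngl (d*v+d) val := by
  funext j
  simp only [chsC, sngl, Pi.add_apply]
  split_ifs <;> (first | (exfalso; omega) | simp)

/-- facts about the children of a node at height γ+1 ≥ 2 -/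
lemma child_facts {d h v γ : ℕ} (hd : 2 ≤ d) (hγ : 1 ≤ γ) (hv : atH d h v (γ+1)) :
    v < treeSize d h ∧ (∀ k, k < d → atH d h (d*v+1+k) γ) ∧
    d*v+d < treeSize d h ∧ atH d h (d*v+d) γ := by
  have h1 : v < treeSize d h := atH_lt_n (by omega) hv
  have h2 : ∀ k, k < d → atH d h (d*v+1+k) γ := fun k hk => atH_child (by omega) hv hk
  have h3 : atH d h (d*v+d) γ := by
    have := h2 (d-1) (by omega)
    have he : d*v+1+(d-1) = d*v+d := by omega
    rwa [he] at this
  exact ⟨h1, h2, atH_lt_n hγ h3, h3⟩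

/-- Build full black pebbles on all d children of a height-2 node. -/
lemma leafFull {d h v : ℕ} (hd : 2 ≤ d) (hv : atH d h v 2) (W : Cfg)
    (hWs : ∀ j, ¬ Desc d v j → W j = 0) (hWv : Valid (treeSize d h) W)
    (hWch : ∀ k, k < d → ∀ j, Desc d (d*v+1+k) j → W j = 0) (P : ℝ)
    (hpk : ∀ k : ℕ, k < d → weight (treeSize d h) W + (k:ℝ) + 1 ≤ P) :
    Strat d (treeSize d h) v (W + chsC d v d 0) (W + chsC d v d ((1:ℝ),(0:ℝ))) P := by
  obtain ⟨hvn, hch, hcn, hlast⟩ := child_facts hd (by omega) hv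
  apply seqSibs hd (by omega) (le_refl d) (by omega) W hWs hWv hWch
    ((1:ℝ),(0:ℝ)) 0 (by norm_num) (by norm_num) (by norm_num)
    (by norm_num) (by norm_num) (by norm_num) 1 P (by norm_num)
  · intro k hk
    exact leafStrat (atH_leaf (by omega) (hch k hk)) 0 ((1:ℝ),(0:ℝ)) 1
      (by norm_num) (by norm_num) (by norm_num) (by norm_num) (by norm_num) (by norm_num)
  · intro k hk
    have := hpk k hk
    simp only [Prod.fst_zero, Prod.snd_zero]
    norm_num
    linarith

/-- Base cases combined: on a height-2 node, from white w to black b. -/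
lemma base_core {d h v : ℕ} (hd : 2 ≤ d) (hv : atH d h v 2) (w b : ℝ)
    (hw0 : 0 ≤ w) (hw1 : w ≤ 1) (hb0 : 0 ≤ b) (hb1 : b ≤ 1) (P : ℝ)
    (hP1 : w + ((d:ℝ)-1) + 1 ≤ P) (hP2 : b ≤ P) :
    Strat d (treeSize d h) v (sngl v ((0:ℝ),w)) (sngl v (b,(0:ℝ))) P := by
  obtain ⟨hvn, hch, hcn, hlast⟩ := child_facts hd (by omega) hv
  set n := treeSize d h with hn
  have hd1 : (1:ℝ) ≤ (d:ℝ) := by exact_mod_cast (by omega : 1 ≤ d)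
  have hWs : ∀ j, ¬ Desc d v j → sngl v ((0:ℝ),w) j = 0 :=
    fun j hj => sngl_ne (ne_of_not_desc hj) _
  have hWv : Valid n (sngl v ((0:ℝ),w)) := valid_sngl hvn (by norm_num) (by simpa) (by simpa)
  have hWch : ∀ k, k < d → ∀ j, Desc d (d*v+1+k) j → sngl v ((0:ℝ),w) j = 0 := by
    intro k hk j hj
    apply sngl_ne
    have h1 : d*v+1+k ≤ j := Desc.le (by omega) hj
    have h2 : v < d*v+1 := by have := v_le_dv (d := d) (v := v) (by omega); omega
    omega
  have hwW : weight n (sngl v ((0:ℝ),w)) = w := by rw [weight_sngl hvn]; simp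
  have ph1 : Strat d n v (sngl v ((0:ℝ),w))
      (sngl v ((0:ℝ),w) + chsC d v d ((1:ℝ),(0:ℝ))) P := by
    have := leafFull hd hv (sngl v ((0:ℝ),w)) hWs hWv hWch P ?_
    · rw [chsC_zero_val, add_zero] at this
      exact this
    · intro k hk
      rw [hwW]
      have : (k:ℝ) ≤ (d:ℝ) - 1 := by
        have : (k:ℝ) + 1 ≤ (d:ℝ) := by exact_mod_cast (by omega : k + 1 ≤ d)
        linarith
      linarith
  have ph2 : Strat d n v (sngl v ((0:ℝ),w) + chsC d v d ((1:ℝ),(0:ℝ)))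
      (sngl v (b,(0:ℝ))) P := by
    have hcov := coverStrat hd hvn hcn 0 (fun j _ => rfl) (valid_zero n) rfl
      (fun k _ => rfl) 0 w b 1 0 1 0 (by norm_num) (by norm_num)
      hb0 hb0 hb1 (by norm_num) hw0 (by simpa)
      (by norm_num) (by norm_num) (by norm_num) (by norm_num)
      P (by rw [weight_zero]; linarith) (by rw [weight_zero]; linarith)
    have e1 : (0 : Cfg) + sngl v ((0:ℝ),w) + chsC d v (d-1) ((1:ℝ),(0:ℝ)) + sngl (d*v+d) ((1:ℝ),(0:ℝ))
        = sngl v ((0:ℝ),w) + chsC d v d ((1:ℝ),(0:ℝ)) := by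
      rw [zero_add, chsC_split_last (by omega : 1 ≤ d) ((1:ℝ),(0:ℝ)), add_assoc]
    have e2 : (0 : Cfg) + sngl v (b,(0:ℝ)) + chsC d v (d-1) ((0:ℝ),(0:ℝ)) + sngl (d*v+d) ((0:ℝ),(0:ℝ))
        = sngl v (b,(0:ℝ)) := by
      simp only [Prod.mk_zero_zero, sngl_zero, chsC_zero_val, zero_add, add_zero]
    rw [e1, e2] at hcov
    exact hcov
  exact ph1.trans ph2

/-- Base case: build a black pebble b on a height-2 node. -/
lemma base_build {d h v : ℕ} (hd : 2 ≤ d) (hv : atH d h v 2) (b : ℝ)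
    (hb0 : 0 ≤ b) (hb1 : b ≤ 1) :
    Strat d (treeSize d h) v 0 (sngl v (b,(0:ℝ)))
      (((d:ℝ)-1)*(((0:ℕ)+2:ℕ):ℝ)/2 + 1 + b/2) := by
  have hd1 : (1:ℝ) ≤ (d:ℝ) := by exact_mod_cast (by omega : 1 ≤ d)
  have := base_core hd hv 0 b (le_refl 0) (by norm_num) hb0 hb1
    (((d:ℝ)-1)*(((0:ℕ)+2:ℕ):ℝ)/2 + 1 + b/2) ?_ ?_
  · rw [show ((0:ℝ),(0:ℝ)) = (0 : ℝ×ℝ) from Prod.mk_zero_zero, sngl_zero] at this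
    exact this
  · push_cast; nlinarith
  · push_cast; nlinarith

/-- Base case: remove a white pebble w from a height-2 node. -/
lemma base_rem {d h v : ℕ} (hd : 2 ≤ d) (hv : atH d h v 2) (w : ℝ)
    (hw0 : 0 ≤ w) (hw1 : w ≤ 1) :
    Strat d (treeSize d h) v (sngl v ((0:ℝ),w)) 0
      (((d:ℝ)-1)*(((0:ℕ)+2:ℕ):ℝ)/2 + 1 + w/2 + w/2) := by
  have hd1 : (1:ℝ) ≤ (d:ℝ) := by exact_mod_cast (by omega : 1 ≤ d)
  have := base_core hd hv w 0 hw0 hw1 (le_refl 0) (by norm_num)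
    (((d:ℝ)-1)*(((0:ℕ)+2:ℕ):ℝ)/2 + 1 + w/2 + w/2) ?_ ?_
  · rw [show ((0:ℝ),(0:ℝ)) = (0 : ℝ×ℝ) from Prod.mk_zero_zero, sngl_zero] at this
    exact this
  · push_cast; nlinarith
  · push_cast; nlinarith

/-- Base case: lazy build of a full black pebble on a height-2 node. -/
lemma base_lazy {d h v : ℕ} (hd : 2 ≤ d) (hv : atH d h v 2) :
    Strat d (treeSize d h) v 0 (sngl v ((1:ℝ),(0:ℝ)) + pend d 0 v)
      (((d:ℝ)-1)*((0:ℕ):ℝ)/2 + (d:ℝ)) := by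
  have hd1 : (1:ℝ) ≤ (d:ℝ) := by exact_mod_cast (by omega : 1 ≤ d)
  have := base_core hd hv 0 1 (le_refl 0) (by norm_num) (by norm_num) (le_refl 1)
    (((d:ℝ)-1)*((0:ℕ):ℝ)/2 + (d:ℝ)) ?_ ?_
  · rw [show ((0:ℝ),(0:ℝ)) = (0 : ℝ×ℝ) from Prod.mk_zero_zero, sngl_zero] at this
    have he : sngl v ((1:ℝ),(0:ℝ)) + pend d 0 v = sngl v ((1:ℝ),(0:ℝ)) := by
      rw [pend_zero_len, add_zero]
    rw [he]
    exact this
  · push_cast; nlinarith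
  · push_cast; nlinarith

/-- Base case: cleaning an empty pend is trivial. -/
lemma base_clean {d h v : ℕ} (hd : 2 ≤ d) (hv : atH d h v 2) :
    Strat d (treeSize d h) v (pend d 0 v) 0
      (((d:ℝ)-1)*(((0:ℕ)+1:ℕ):ℝ)/2 + ((d:ℝ)+1)/2) := by
  have hd1 : (1:ℝ) ≤ (d:ℝ) := by exact_mod_cast (by omega : 1 ≤ d)
  rw [pend_zero_len]
  apply Strat.refl' (fun j _ => rfl) (valid_zero _)
  have hz : (weight (treeSize d h) fun _ => (0:ℝ×ℝ)) = 0 := by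
    simp [weight, pw]
  rw [hz]
  push_cast
  nlinarith

end Frac
namespace Frac

lemma pend_facts {d h p v : ℕ} (hd : 2 ≤ d) (hv : atH d h v (p+3)) :
    (∀ j, ¬ Desc d v j → pend d p (d*v+d) j = 0) ∧
    Valid (treeSize d h) (pend d p (d*v+d)) ∧
    pend d p (d*v+d) v = 0 ∧
    (∀ k, k < d → pend d p (d*v+d) (d*v+1+k) = 0) ∧
    weight (treeSize d h) (pend d p (d*v+d)) = (p:ℝ)*((d:ℝ)-1)/2 ∧
    (∀ k, k < d-1 → ∀ j, Desc d (d*v+1+k) j → pend d p (d*v+d) j = 0) := by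
  obtain ⟨hvn, hch, hcn, hlast⟩ := child_facts hd (by omega) hv
  have hlastc : child d v (d*v+d) := child_lastc (by omega)
  refine ⟨?_, ?_, ?_, ?_, ?_, ?_⟩
  · intro j hj
    apply pend_zero (by omega)
    left
    intro hc
    exact hj ((Desc.of_child hlastc).trans hc)
  · exact pend_valid hd p (d*v+d) (p+1) hlast (by omega)
  · apply pend_zero (by omega)
    right
    have := v_le_dv (d := d) (v := v) (by omega)
    omega
  · intro k hk
    apply pend_zero (by omega)
    right
    omega
  · exact pend_weight hd p (d*v+d) (p+1) hlast (by omega)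
  · intro k hk j hj
    by_contra hc
    obtain ⟨hdesc, _⟩ := pend_ne (by omega : 1 ≤ d) p (d*v+d) j hc
    exact sibling_not_desc (by omega : 1 ≤ d) ⟨k, by omega, rfl⟩ hlastc
      (by omega : d*v+1+k ≠ d*v+d) hj hdesc

lemma step_lazy {d h p v : ℕ} (hd : 2 ≤ d) (hv : atH d h v (p+3))
    (ihB : ∀ u, atH d h u (p+2) → ∀ b:ℝ, 0 ≤ b → b ≤ 1 →
      Strat d (treeSize d h) u 0 (sngl u (b,(0:ℝ))) (((d:ℝ)-1)*((p:ℝ)+2)/2 + 1 + b/2))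
    (ihL : ∀ u, atH d h u (p+2) →
      Strat d (treeSize d h) u 0 (sngl u ((1:ℝ),(0:ℝ)) + pend d p u)
        (((d:ℝ)-1)*(p:ℝ)/2 + (d:ℝ))) :
    Strat d (treeSize d h) v 0 (sngl v ((1:ℝ),(0:ℝ)) + pend d (p+1) v)
      (((d:ℝ)-1)*((p:ℝ)+1)/2 + (d:ℝ)) := by
  obtain ⟨hvn, hch, hcn, hlast⟩ := child_facts hd (by omega) hv
  obtain ⟨hPs, hPv, hPv0, hPch, hPwt, hPchD⟩ := pend_facts hd hv
  set n := treeSize d h with hn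
  set D := ((d:ℝ)-1) with hD
  set P := D*((p:ℝ)+1)/2 + (d:ℝ) with hP
  have hd2 : (2:ℝ) ≤ (d:ℝ) := by exact_mod_cast hd
  have hD1 : (1:ℝ) ≤ D := by rw [hD]; linarith
  have hp0 : (0:ℝ) ≤ (p:ℝ) := Nat.cast_nonneg p
  have hchn : d*v+1+(d-1) ≤ n := by omega
  have hlastcC : child d v (d*v+d) := child_lastc (by omega)
  have hcastk : ∀ k : ℕ, k < d-1 → (k:ℝ) ≤ (d:ℝ)-2 := by
    intro k hk
    have : (k:ℝ) + 2 ≤ (d:ℝ) := by exact_mod_cast (by omega : k + 2 ≤ d)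
    linarith
  have hdm1 : ((d-1:ℕ):ℝ) = D := by rw [hD]; exact cast_dm1 (by omega)
  -- Phase 1 : children get black 1/2
  have ph1 : Strat d n v 0 (chsC d v (d-1) ((1:ℝ)/2,(0:ℝ))) P := by
    have hs := seqSibs hd (by omega) (by omega) hchn 0 (fun j _ => rfl) (valid_zero n)
      (fun k _ j _ => rfl) ((1:ℝ)/2,(0:ℝ)) 0 (by norm_num) (by norm_num) (by norm_num)
      (by norm_num) (by norm_num) (by norm_num)
      (D*((p:ℝ)+2)/2 + 1 + ((1:ℝ)/2)/2) P (by norm_num; nlinarith)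
      (fun k hk => by
        rw [sngl_zero]
        exact ihB _ (hch k (by omega)) ((1:ℝ)/2) (by norm_num) (by norm_num))
      ?_
    · rwa [chsC_zero_val, zero_add, zero_add] at hs
    · intro k hk
      rw [weight_zero, hdm1]
      have hk' := hcastk k hk
      simp only [Prod.fst_zero, Prod.snd_zero]
      norm_num
      nlinarith
  -- Phase 2 : lazy build of the last child
  have ph2 : Strat d n v (chsC d v (d-1) ((1:ℝ)/2,(0:ℝ)))
      (chsC d v (d-1) ((1:ℝ)/2,(0:ℝ)) + (sngl (d*v+d) ((1:ℝ),(0:ℝ)) + pend d p (d*v+d))) P := by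
    have hZu : ∀ j, Desc d (d*v+d) j → chsC d v (d-1) ((1:ℝ)/2,(0:ℝ)) j = 0 := by
      intro j hj
      by_contra hc
      have hrange : d*v+1 ≤ j ∧ j < d*v+1+(d-1) := by
        by_contra hr
        exact hc (chsC_out hr _)
      exact not_desc_of_other_child (by omega : 1 ≤ d) hlastcC
        ⟨j - (d*v+1), by omega, by omega⟩ (by omega) hj
    have hZr : ∀ j, ¬ Desc d v j → chsC d v (d-1) ((1:ℝ)/2,(0:ℝ)) j = 0 := by
      intro j hj
      by_contra hc
      exact hj (Desc.of_child (chsC_desc (by omega) (by omega) _ hc))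
    have hl := Strat.lift (n := n) (Desc.of_child hlastcC) _ hZr hZu
      (valid_chsC hchn (by norm_num) (by norm_num) (by norm_num))
      (ihL (d*v+d) hlast)
    rw [add_zero] at hl
    apply Strat.mono _ hl
    rw [weight_chsC hchn, hdm1]
    rw [hP]
    norm_num
    nlinarith
  -- Phase 3 : top the siblings with white 1/2
  have ph3 : Strat d n v
      ((sngl (d*v+d) ((1:ℝ),(0:ℝ)) + pend d p (d*v+d)) + chsC d v (d-1) ((1:ℝ)/2,(0:ℝ)))
      ((sngl (d*v+d) ((1:ℝ),(0:ℝ)) + pend d p (d*v+d)) + chsC d v (d-1) ((1:ℝ)/2,(1:ℝ)/2)) P := by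
    have hWs : ∀ j, ¬ Desc d v j → (sngl (d*v+d) ((1:ℝ),(0:ℝ)) + pend d p (d*v+d)) j = 0 := by
      intro j hj
      have h1 : sngl (d*v+d) ((1:ℝ),(0:ℝ)) j = 0 := by
        apply sngl_ne
        intro he
        exact hj (by rw [he]; exact Desc.of_child hlastcC)
      simp only [Pi.add_apply, h1, hPs j hj, add_zero]
    have hWv : Valid n (sngl (d*v+d) ((1:ℝ),(0:ℝ)) + pend d p (d*v+d)) := by
      apply valid_add (valid_sngl (by omega) (by norm_num) (by norm_num) (by norm_num)) hPv
      intro i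
      by_cases hi : i = d*v+d
      · subst hi
        right
        apply pend_zero (by omega)
        right
        exact le_refl _
      · exact Or.inl (sngl_ne hi _)
    have hWch : ∀ k, k < d-1 → ∀ j, Desc d (d*v+1+k) j →
        (sngl (d*v+d) ((1:ℝ),(0:ℝ)) + pend d p (d*v+d)) j = 0 := by
      intro k hk j hj
      have h1 : sngl (d*v+d) ((1:ℝ),(0:ℝ)) j = 0 := by
        apply sngl_ne
        intro he
        subst he
        exact not_desc_of_other_child (by omega : 1 ≤ d) ⟨k, by omega, rfl⟩ hlastcC
          (by omega) hj
      simp only [Pi.add_apply, h1, hPchD k hk j hj, add_zero]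
    have hwW : weight n (sngl (d*v+d) ((1:ℝ),(0:ℝ)) + pend d p (d*v+d))
        = 1 + (p:ℝ)*D/2 := by
      rw [weight_add, weight_sngl (by omega), hPwt]
      norm_num
    apply seqSibs hd (by omega) (by omega) hchn _ hWs hWv hWch
      ((1:ℝ)/2,(1:ℝ)/2) ((1:ℝ)/2,(0:ℝ)) (by norm_num) (by norm_num) (by norm_num)
      (by norm_num) (by norm_num) (by norm_num) 1 P (by norm_num)
    · intro k hk
      exact whiteStrat (by have := atH_lt_n (by omega : 1 ≤ p+2) (hch k (by omega)); omega)
        ((1:ℝ)/2,(0:ℝ)) ((1:ℝ)/2,(1:ℝ)/2) 1 (by norm_num) (by norm_num) (by norm_num)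
        (by norm_num) (by norm_num) (by norm_num)
    · intro k hk
      rw [hwW, hdm1]
      have hk' := hcastk k hk
      simp only []
      norm_num
      nlinarith
  -- Phase 4 : cover v
  have ph4 : Strat d n v
      (pend d p (d*v+d) + sngl v ((0:ℝ),(0:ℝ)) + chsC d v (d-1) ((1:ℝ)/2,(1:ℝ)/2)
        + sngl (d*v+d) ((1:ℝ),(0:ℝ)))
      (pend d p (d*v+d) + sngl v ((1:ℝ),(0:ℝ)) + chsC d v (d-1) ((0:ℝ),(1:ℝ)/2)
        + sngl (d*v+d) ((0:ℝ),(0:ℝ))) P := by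
    apply coverStrat hd hvn hcn _ hPs hPv hPv0 hPch
      0 0 1 ((1:ℝ)/2) ((1:ℝ)/2) 1 0 (by norm_num) (by norm_num)
      (by norm_num) (by norm_num) (by norm_num) (by norm_num) (by norm_num) (by norm_num)
      (by norm_num) (by norm_num) (by norm_num) (by norm_num)
    · rw [hPwt, hP]
      nlinarith
    · rw [hPwt, hP, ← hD]
      nlinarith
  -- assemble
  have e23 : chsC d v (d-1) ((1:ℝ)/2,(0:ℝ)) + (sngl (d*v+d) ((1:ℝ),(0:ℝ)) + pend d p (d*v+d))
      = (sngl (d*v+d) ((1:ℝ),(0:ℝ)) + pend d p (d*v+d)) + chsC d v (d-1) ((1:ℝ)/2,(0:ℝ)) := by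
    abel
  have e34 : (sngl (d*v+d) ((1:ℝ),(0:ℝ)) + pend d p (d*v+d)) + chsC d v (d-1) ((1:ℝ)/2,(1:ℝ)/2)
      = pend d p (d*v+d) + sngl v ((0:ℝ),(0:ℝ)) + chsC d v (d-1) ((1:ℝ)/2,(1:ℝ)/2)
        + sngl (d*v+d) ((1:ℝ),(0:ℝ)) := by
    rw [Prod.mk_zero_zero, sngl_zero, add_zero]
    abel
  have e4f : pend d p (d*v+d) + sngl v ((1:ℝ),(0:ℝ)) + chsC d v (d-1) ((0:ℝ),(1:ℝ)/2)
        + sngl (d*v+d) ((0:ℝ),(0:ℝ))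
      = sngl v ((1:ℝ),(0:ℝ)) + pend d (p+1) v := by
    rw [Prod.mk_zero_zero, sngl_zero, add_zero, pend_succ]
    abel
  rw [e23] at ph2
  rw [← e34, e4f] at ph4
  exact ((ph1.trans ph2).trans ph3).trans ph4

lemma step_clean {d h p v : ℕ} (hd : 2 ≤ d) (hv : atH d h v (p+3))
    (ihW : ∀ u, atH d h u (p+2) → ∀ w:ℝ, 0 ≤ w → w ≤ 1 →
      Strat d (treeSize d h) u (sngl u ((0:ℝ),w)) 0
        (((d:ℝ)-1)*((p:ℝ)+2)/2 + 1 + w/2 + (if p = 0 then w/2 else 0)))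
    (ihC : ∀ u, atH d h u (p+2) →
      Strat d (treeSize d h) u (pend d p u) 0 (((d:ℝ)-1)*((p:ℝ)+1)/2 + ((d:ℝ)+1)/2)) :
    Strat d (treeSize d h) v (pend d (p+1) v) 0
      (((d:ℝ)-1)*((p:ℝ)+2)/2 + ((d:ℝ)+1)/2) := by
  obtain ⟨hvn, hch, hcn, hlast⟩ := child_facts hd (by omega) hv
  obtain ⟨hPs, hPv, hPv0, hPch, hPwt, hPchD⟩ := pend_facts hd hv
  set n := treeSize d h with hn
  set D := ((d:ℝ)-1) with hD
  set P := D*((p:ℝ)+2)/2 + ((d:ℝ)+1)/2 with hP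
  have hd2 : (2:ℝ) ≤ (d:ℝ) := by exact_mod_cast hd
  have hD1 : (1:ℝ) ≤ D := by rw [hD]; linarith
  have hp0 : (0:ℝ) ≤ (p:ℝ) := Nat.cast_nonneg p
  have hchn : d*v+1+(d-1) ≤ n := by omega
  have hlastcC : child d v (d*v+d) := child_lastc (by omega)
  have hdm1 : ((d-1:ℕ):ℝ) = D := by rw [hD]; exact cast_dm1 (by omega)
  have hcastk : ∀ k : ℕ, k < d-1 → (k:ℝ) ≤ (d:ℝ)-2 := by
    intro k hk
    have : (k:ℝ) + 2 ≤ (d:ℝ) := by exact_mod_cast (by omega : k + 2 ≤ d)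
    linarith
  -- Phase 1 : clean the deep pend
  have ph1 : Strat d n v (pend d (p+1) v) (chsC d v (d-1) ((0:ℝ),(1:ℝ)/2)) P := by
    have hZu : ∀ j, Desc d (d*v+d) j → chsC d v (d-1) ((0:ℝ),(1:ℝ)/2) j = 0 := by
      intro j hj
      by_contra hc
      have hrange : d*v+1 ≤ j ∧ j < d*v+1+(d-1) := by
        by_contra hr
        exact hc (chsC_out hr _)
      exact not_desc_of_other_child (by omega : 1 ≤ d) hlastcC
        ⟨j - (d*v+1), by omega, by omega⟩ (by omega) hj
    have hZr : ∀ j, ¬ Desc d v j → chsC d v (d-1) ((0:ℝ),(1:ℝ)/2) j = 0 := by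
      intro j hj
      by_contra hc
      exact hj (Desc.of_child (chsC_desc (by omega) (by omega) _ hc))
    have hl := Strat.lift (n := n) (Desc.of_child hlastcC) _ hZr hZu
      (valid_chsC hchn (by norm_num) (by norm_num) (by norm_num))
      (ihC (d*v+d) hlast)
    rw [add_zero] at hl
    have he : chsC d v (d-1) ((0:ℝ),(1:ℝ)/2) + pend d p (d*v+d) = pend d (p+1) v :=
      (pend_succ d p v).symm
    rw [he] at hl
    apply Strat.mono _ hl
    rw [weight_chsC hchn, hdm1, hP]
    norm_num
    nlinarith
  -- Phase 2 : remove the sibling whites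
  have ph2 : Strat d n v (chsC d v (d-1) ((0:ℝ),(1:ℝ)/2)) 0 P := by
    have hs := seqSibs hd (by omega) (by omega) hchn 0 (fun j _ => rfl) (valid_zero n)
      (fun k _ j _ => rfl) 0 ((0:ℝ),(1:ℝ)/2) (by norm_num) (by norm_num) (by norm_num)
      (by norm_num) (by norm_num) (by norm_num)
      (D*((p:ℝ)+2)/2 + 1 + ((1:ℝ)/2)/2 + (if p = 0 then ((1:ℝ)/2)/2 else 0)) P ?_
      (fun k hk => by
        rw [sngl_zero]
        exact ihW _ (hch k (by omega)) ((1:ℝ)/2) (by norm_num) (by norm_num))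
      ?_
    · rwa [chsC_zero_val, zero_add, zero_add] at hs
    · norm_num
      split_ifs <;> nlinarith
    · intro k hk
      rw [weight_zero, hdm1]
      have hk' := hcastk k hk
      simp only [Prod.fst_zero, Prod.snd_zero]
      norm_num
      split_ifs <;> nlinarith
  exact ph1.trans ph2

end Frac
namespace Frac

set_option maxHeartbeats 1000000

lemma step_build {d h p v : ℕ} (hd : 2 ≤ d) (hv : atH d h v (p+3)) (b : ℝ)
    (hb0 : 0 ≤ b) (hb1 : b ≤ 1)
    (ihB : ∀ u, atH d h u (p+2) → ∀ b':ℝ, 0 ≤ b' → b' ≤ 1 →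
      Strat d (treeSize d h) u 0 (sngl u (b',(0:ℝ))) (((d:ℝ)-1)*((p:ℝ)+2)/2 + 1 + b'/2))
    (ihW : ∀ u, atH d h u (p+2) → ∀ w:ℝ, 0 ≤ w → w ≤ 1 →
      Strat d (treeSize d h) u (sngl u ((0:ℝ),w)) 0
        (((d:ℝ)-1)*((p:ℝ)+2)/2 + 1 + w/2 + (if p = 0 then w/2 else 0)))
    (ihL : ∀ u, atH d h u (p+2) →
      Strat d (treeSize d h) u 0 (sngl u ((1:ℝ),(0:ℝ)) + pend d p u)
        (((d:ℝ)-1)*(p:ℝ)/2 + (d:ℝ)))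
    (ihC : ∀ u, atH d h u (p+2) →
      Strat d (treeSize d h) u (pend d p u) 0 (((d:ℝ)-1)*((p:ℝ)+1)/2 + ((d:ℝ)+1)/2)) :
    Strat d (treeSize d h) v 0 (sngl v (b,(0:ℝ)))
      (((d:ℝ)-1)*((p:ℝ)+3)/2 + 1 + b/2) := by
  obtain ⟨hvn, hch, hcn, hlast⟩ := child_facts hd (by omega) hv
  obtain ⟨hPs, hPv, hPv0, hPch, hPwt, hPchD⟩ := pend_facts hd hv
  set n := treeSize d h with hn
  set D := ((d:ℝ)-1) with hD
  clear_value D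
  have hd2 : (2:ℝ) ≤ (d:ℝ) := by exact_mod_cast hd
  have hD1 : (1:ℝ) ≤ D := by rw [hD]; linarith
  have hD0 : D ≠ 0 := by intro hc; rw [hc] at hD1; linarith
  have hp0 : (0:ℝ) ≤ (p:ℝ) := Nat.cast_nonneg p
  set a' := (1:ℝ)/2 + b/(2*D) with ha'
  clear_value a'
  have hDa : D * a' = D/2 + b/2 := by
    rw [ha']
    field_simp
  have ha'0 : 0 ≤ a' := by
    rw [ha']
    have : 0 ≤ b/(2*D) := by positivity
    linarith
  have ha'1 : a' ≤ 1 := by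
    have h2D : (0:ℝ) < 2*D := by linarith
    have hb2 : b/(2*D) ≤ 1/2 := by
      rw [div_le_iff₀ h2D]
      nlinarith
    rw [ha']
    linarith
  have h1a0 : 0 ≤ 1 - a' := by linarith
  set P := D*((p:ℝ)+3)/2 + 1 + b/2 with hP
  clear_value P
  have hchn : d*v+1+(d-1) ≤ n := by omega
  have hlastcC : child d v (d*v+d) := child_lastc (by omega)
  have hdm1 : ((d-1:ℕ):ℝ) = D := by rw [hD]; exact cast_dm1 (by omega)
  have hcastk : ∀ k : ℕ, k < d-1 → (k:ℝ) ≤ (d:ℝ)-2 := by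
    intro k hk
    have : (k:ℝ) + 2 ≤ (d:ℝ) := by exact_mod_cast (by omega : k + 2 ≤ d)
    linarith
  have hZuC : ∀ (val : ℝ×ℝ), ∀ j, Desc d (d*v+d) j → chsC d v (d-1) val j = 0 := by
    intro val j hj
    by_contra hc
    have hrange : d*v+1 ≤ j ∧ j < d*v+1+(d-1) := by
      by_contra hr
      exact hc (chsC_out hr _)
    exact not_desc_of_other_child (by omega : 1 ≤ d) hlastcC
      ⟨j - (d*v+1), by omega, by omega⟩ (by omega) hj
  have hZrC : ∀ (val : ℝ×ℝ), ∀ j, ¬ Desc d v j → chsC d v (d-1) val j = 0 := by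
    intro val j hj
    by_contra hc
    exact hj (Desc.of_child (chsC_desc (by omega) (by omega) _ hc))
  -- Phase 1 : children get black a'
  have ph1 : Strat d n v 0 (chsC d v (d-1) (a',(0:ℝ))) P := by
    have hs := seqSibs hd (by omega) (by omega) hchn 0 (fun j _ => rfl) (valid_zero n)
      (fun k _ j _ => rfl) (a',(0:ℝ)) 0 ha'0 (by norm_num) (by simpa using ha'1)
      (by norm_num) (by norm_num) (by norm_num)
      (D*((p:ℝ)+2)/2 + 1 + a'/2) P
      (by simp only [Prod.fst_zero, Prod.snd_zero, add_zero]
          nlinarith [mul_nonneg (by linarith : (0:ℝ) ≤ D) (by linarith : (0:ℝ) ≤ (p:ℝ)+2)])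
      (fun k hk => by
        rw [sngl_zero]
        exact ihB _ (hch k (by omega)) a' ha'0 ha'1)
      ?_
    · rwa [chsC_zero_val, zero_add, zero_add] at hs
    · intro k hk
      rw [weight_zero, hdm1]
      have hk' := hcastk k hk
      have hk0 : (0:ℝ) ≤ (k:ℝ) := Nat.cast_nonneg k
      simp only [Prod.fst_zero, Prod.snd_zero]
      norm_num
      nlinarith [mul_le_mul_of_nonneg_right hk' ha'0]
  -- Phase 2 : lazy build of the last child
  have ph2 : Strat d n v (chsC d v (d-1) (a',(0:ℝ)))
      (chsC d v (d-1) (a',(0:ℝ)) + (sngl (d*v+d) ((1:ℝ),(0:ℝ)) + pend d p (d*v+d))) P := by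
    have hl := Strat.lift (n := n) (Desc.of_child hlastcC) _ (hZrC (a',(0:ℝ))) (hZuC (a',(0:ℝ)))
      (valid_chsC hchn ha'0 (by norm_num) (by simpa using ha'1))
      (ihL (d*v+d) hlast)
    rw [add_zero] at hl
    apply Strat.mono _ hl
    rw [weight_chsC hchn, hdm1, hP]
    norm_num
    nlinarith
  -- Phase 3 : top the siblings with white 1-a'
  have ph3 : Strat d n v
      ((sngl (d*v+d) ((1:ℝ),(0:ℝ)) + pend d p (d*v+d)) + chsC d v (d-1) (a',(0:ℝ)))
      ((sngl (d*v+d) ((1:ℝ),(0:ℝ)) + pend d p (d*v+d)) + chsC d v (d-1) (a',1-a')) P := by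
    have hWs : ∀ j, ¬ Desc d v j → (sngl (d*v+d) ((1:ℝ),(0:ℝ)) + pend d p (d*v+d)) j = 0 := by
      intro j hj
      have h1 : sngl (d*v+d) ((1:ℝ),(0:ℝ)) j = 0 := by
        apply sngl_ne
        intro he
        exact hj (by rw [he]; exact Desc.of_child hlastcC)
      simp only [Pi.add_apply, h1, hPs j hj, add_zero]
    have hWv : Valid n (sngl (d*v+d) ((1:ℝ),(0:ℝ)) + pend d p (d*v+d)) := by
      apply valid_add (valid_sngl (by omega) (by norm_num) (by norm_num) (by norm_num)) hPv
      intro i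
      by_cases hi : i = d*v+d
      · subst hi
        right
        apply pend_zero (by omega)
        right
        exact le_refl _
      · exact Or.inl (sngl_ne hi _)
    have hWch : ∀ k, k < d-1 → ∀ j, Desc d (d*v+1+k) j →
        (sngl (d*v+d) ((1:ℝ),(0:ℝ)) + pend d p (d*v+d)) j = 0 := by
      intro k hk j hj
      have h1 : sngl (d*v+d) ((1:ℝ),(0:ℝ)) j = 0 := by
        apply sngl_ne
        intro he
        subst he
        exact not_desc_of_other_child (by omega : 1 ≤ d) ⟨k, by omega, rfl⟩ hlastcC
          (by omega) hj
      simp only [Pi.add_apply, h1, hPchD k hk j hj, add_zero]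
    have hwW : weight n (sngl (d*v+d) ((1:ℝ),(0:ℝ)) + pend d p (d*v+d))
        = 1 + (p:ℝ)*D/2 := by
      rw [weight_add, weight_sngl (by omega), hPwt]
      norm_num
    apply seqSibs hd (by omega) (by omega) hchn _ hWs hWv hWch
      (a',1-a') (a',(0:ℝ)) ha'0 h1a0 (by simp only []; linarith)
      ha'0 (by norm_num) (by simpa using ha'1) 1 P (by simpa using ha'1)
    · intro k hk
      exact whiteStrat (by have := atH_lt_n (by omega : 1 ≤ p+2) (hch k (by omega)); omega)
        (a',(0:ℝ)) (a',1-a') 1 (by norm_num) (by simp only []; linarith) ha'0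
        (by norm_num) (by simp only []; linarith) (by simp only []; linarith)
    · intro k hk
      rw [hwW, hdm1]
      have hk' := hcastk k hk
      have hk0 : (0:ℝ) ≤ (k:ℝ) := Nat.cast_nonneg k
      simp only []
      norm_num
      nlinarith [mul_le_mul_of_nonneg_left ha'1 (by linarith : (0:ℝ) ≤ (d:ℝ)-2-(k:ℝ)),
        mul_le_mul_of_nonneg_right hk' (by norm_num : (0:ℝ) ≤ 1)]
  -- Phase 4 : cover v, putting black b on it
  have ph4 : Strat d n v
      (pend d p (d*v+d) + sngl v ((0:ℝ),(0:ℝ)) + chsC d v (d-1) (a',1-a')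
        + sngl (d*v+d) ((1:ℝ),(0:ℝ)))
      (pend d p (d*v+d) + sngl v (b,(0:ℝ)) + chsC d v (d-1) ((0:ℝ),1-a')
        + sngl (d*v+d) ((0:ℝ),(0:ℝ))) P := by
    apply coverStrat hd hvn hcn _ hPs hPv hPv0 hPch
      0 0 b a' (1-a') 1 0 (by ring) (by norm_num)
      hb0 hb0 hb1 (by norm_num) (by norm_num) (by norm_num)
      ha'0 h1a0 (by norm_num) (by norm_num)
    · rw [hPwt, hP]
      nlinarith
    · rw [hPwt, hP, ← hD]
      nlinarith
  -- Phase 5 : clean the deep pend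
  have ph5 : Strat d n v
      ((sngl v (b,(0:ℝ)) + chsC d v (d-1) ((0:ℝ),1-a')) + pend d p (d*v+d))
      (sngl v (b,(0:ℝ)) + chsC d v (d-1) ((0:ℝ),1-a')) P := by
    have hZr : ∀ j, ¬ Desc d v j →
        (sngl v (b,(0:ℝ)) + chsC d v (d-1) ((0:ℝ),1-a')) j = 0 := by
      intro j hj
      simp only [Pi.add_apply, sngl_ne (ne_of_not_desc hj), hZrC ((0:ℝ),1-a') j hj, add_zero]
    have hZu : ∀ j, Desc d (d*v+d) j →
        (sngl v (b,(0:ℝ)) + chsC d v (d-1) ((0:ℝ),1-a')) j = 0 := by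
      intro j hj
      have h1 : j ≠ v := by
        have h2 := Desc.le (by omega : 1 ≤ d) hj
        have := v_le_dv (d := d) (v := v) (by omega)
        omega
      simp only [Pi.add_apply, sngl_ne h1, hZuC ((0:ℝ),1-a') j hj, add_zero]
    have hZv : Valid n (sngl v (b,(0:ℝ)) + chsC d v (d-1) ((0:ℝ),1-a')) := by
      apply valid_add (valid_sngl hvn hb0 (by norm_num) (by simpa using hb1))
        (valid_chsC hchn (by norm_num) h1a0 (by simp only []; linarith))
      intro i
      by_cases hi : i = v
      · right
        rw [hi]
        have hvv := v_le_dv (d := d) (v := v) (by omega : 1 ≤ d)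
        exact chsC_out (by omega) _
      · exact Or.inl (sngl_ne hi _)
    have hl := Strat.lift (n := n) (Desc.of_child hlastcC) _ hZr hZu hZv
      (ihC (d*v+d) hlast)
    rw [add_zero] at hl
    apply Strat.mono _ hl
    rw [weight_add, weight_sngl hvn, weight_chsC hchn, hdm1, hP]
    norm_num
    nlinarith
  -- Phase 6 : remove the sibling whites
  have ph6 : Strat d n v (sngl v (b,(0:ℝ)) + chsC d v (d-1) ((0:ℝ),1-a'))
      (sngl v (b,(0:ℝ))) P := by
    have hWs : ∀ j, ¬ Desc d v j → sngl v (b,(0:ℝ)) j = 0 :=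
      fun j hj => sngl_ne (ne_of_not_desc hj) _
    have hWv : Valid n (sngl v (b,(0:ℝ))) := valid_sngl hvn hb0 (by norm_num) (by simpa using hb1)
    have hWch : ∀ k, k < d-1 → ∀ j, Desc d (d*v+1+k) j → sngl v (b,(0:ℝ)) j = 0 := by
      intro k hk j hj
      apply sngl_ne
      have h1 : d*v+1+k ≤ j := Desc.le (by omega) hj
      have h2 := v_le_dv (d := d) (v := v) (by omega)
      omega
    have hs := seqSibs hd (by omega) (by omega) hchn _ hWs hWv hWch
      0 ((0:ℝ),1-a') (by norm_num) (by norm_num) (by norm_num)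
      (by norm_num) h1a0 (by simp only []; linarith)
      (D*((p:ℝ)+2)/2 + 1 + (1-a')/2 + (if p = 0 then (1-a')/2 else 0)) P ?_
      (fun k hk => by
        rw [sngl_zero]
        exact ihW _ (hch k (by omega)) (1-a') h1a0 (by linarith))
      ?_
    · rwa [chsC_zero_val, add_zero] at hs
    · simp only []
      norm_num
      split_ifs <;> nlinarith
    · intro k hk
      rw [weight_sngl hvn, hdm1]
      have hk' := hcastk k hk
      have hk0 : (0:ℝ) ≤ (k:ℝ) := Nat.cast_nonneg k
      simp only [Prod.fst_zero, Prod.snd_zero]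
      norm_num
      split_ifs <;>
        nlinarith [mul_le_mul_of_nonneg_right hk0 h1a0]
  -- assemble
  have e23 : chsC d v (d-1) (a',(0:ℝ)) + (sngl (d*v+d) ((1:ℝ),(0:ℝ)) + pend d p (d*v+d))
      = (sngl (d*v+d) ((1:ℝ),(0:ℝ)) + pend d p (d*v+d)) + chsC d v (d-1) (a',(0:ℝ)) := by
    abel
  have e34 : (sngl (d*v+d) ((1:ℝ),(0:ℝ)) + pend d p (d*v+d)) + chsC d v (d-1) (a',1-a')
      = pend d p (d*v+d) + sngl v ((0:ℝ),(0:ℝ)) + chsC d v (d-1) (a',1-a')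
        + sngl (d*v+d) ((1:ℝ),(0:ℝ)) := by
    rw [Prod.mk_zero_zero, sngl_zero, add_zero]
    abel
  have e45 : pend d p (d*v+d) + sngl v (b,(0:ℝ)) + chsC d v (d-1) ((0:ℝ),1-a')
        + sngl (d*v+d) ((0:ℝ),(0:ℝ))
      = (sngl v (b,(0:ℝ)) + chsC d v (d-1) ((0:ℝ),1-a')) + pend d p (d*v+d) := by
    rw [Prod.mk_zero_zero, sngl_zero, add_zero]
    abel
  rw [e23] at ph2
  rw [← e34, e45] at ph4
  exact ((((ph1.trans ph2).trans ph3).trans ph4).trans ph5).trans ph6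

end Frac
namespace Frac

set_option maxHeartbeats 1000000

lemma step_rem {d h p v : ℕ} (hd : 2 ≤ d) (hv : atH d h v (p+3)) (w : ℝ)
    (hw0 : 0 ≤ w) (hw1 : w ≤ 1)
    (ihB : ∀ u, atH d h u (p+2) → ∀ b':ℝ, 0 ≤ b' → b' ≤ 1 →
      Strat d (treeSize d h) u 0 (sngl u (b',(0:ℝ))) (((d:ℝ)-1)*((p:ℝ)+2)/2 + 1 + b'/2))
    (ihW : ∀ u, atH d h u (p+2) → ∀ w':ℝ, 0 ≤ w' → w' ≤ 1 →
      Strat d (treeSize d h) u (sngl u ((0:ℝ),w')) 0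
        (((d:ℝ)-1)*((p:ℝ)+2)/2 + 1 + w'/2 + (if p = 0 then w'/2 else 0)))
    (ihL : ∀ u, atH d h u (p+2) →
      Strat d (treeSize d h) u 0 (sngl u ((1:ℝ),(0:ℝ)) + pend d p u)
        (((d:ℝ)-1)*(p:ℝ)/2 + (d:ℝ)))
    (ihC : ∀ u, atH d h u (p+2) →
      Strat d (treeSize d h) u (pend d p u) 0 (((d:ℝ)-1)*((p:ℝ)+1)/2 + ((d:ℝ)+1)/2)) :
    Strat d (treeSize d h) v (sngl v ((0:ℝ),w)) 0
      (((d:ℝ)-1)*((p:ℝ)+3)/2 + 1 + w/2) := by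
  obtain ⟨hvn, hch, hcn, hlast⟩ := child_facts hd (by omega) hv
  obtain ⟨hPs, hPv, hPv0, hPch, hPwt, hPchD⟩ := pend_facts hd hv
  set n := treeSize d h with hn
  set D := ((d:ℝ)-1) with hD
  clear_value D
  have hd2 : (2:ℝ) ≤ (d:ℝ) := by exact_mod_cast hd
  have hD1 : (1:ℝ) ≤ D := by rw [hD]; linarith
  have hD0 : D ≠ 0 := by intro hc; rw [hc] at hD1; linarith
  have hp0 : (0:ℝ) ≤ (p:ℝ) := Nat.cast_nonneg p
  set a := (1:ℝ)/2 - w/(2*D) with ha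
  clear_value a
  have hDa : D * a = D/2 - w/2 := by
    rw [ha]
    field_simp
  have ha0 : 0 ≤ a := by
    have h2D : (0:ℝ) < 2*D := by linarith
    have hb2 : w/(2*D) ≤ 1/2 := by
      rw [div_le_iff₀ h2D]
      nlinarith
    rw [ha]
    linarith
  have ha1 : a ≤ 1 := by
    have : 0 ≤ w/(2*D) := by positivity
    rw [ha]
    linarith
  have h1a0 : 0 ≤ 1 - a := by linarith
  set P := D*((p:ℝ)+3)/2 + 1 + w/2 with hP
  clear_value P
  have hchn : d*v+1+(d-1) ≤ n := by omega
  have hlastcC : child d v (d*v+d) := child_lastc (by omega)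
  have hdm1 : ((d-1:ℕ):ℝ) = D := by rw [hD]; exact cast_dm1 (by omega)
  have hcastk : ∀ k : ℕ, k < d-1 → (k:ℝ) ≤ (d:ℝ)-2 := by
    intro k hk
    have : (k:ℝ) + 2 ≤ (d:ℝ) := by exact_mod_cast (by omega : k + 2 ≤ d)
    linarith
  have hZuC : ∀ (val : ℝ×ℝ), ∀ j, Desc d (d*v+d) j → chsC d v (d-1) val j = 0 := by
    intro val j hj
    by_contra hc
    have hrange : d*v+1 ≤ j ∧ j < d*v+1+(d-1) := by
      by_contra hr
      exact hc (chsC_out hr _)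
    exact not_desc_of_other_child (by omega : 1 ≤ d) hlastcC
      ⟨j - (d*v+1), by omega, by omega⟩ (by omega) hj
  have hZrC : ∀ (val : ℝ×ℝ), ∀ j, ¬ Desc d v j → chsC d v (d-1) val j = 0 := by
    intro val j hj
    by_contra hc
    exact hj (Desc.of_child (chsC_desc (by omega) (by omega) _ hc))
  have hWs0 : ∀ j, ¬ Desc d v j → sngl v ((0:ℝ),w) j = 0 :=
    fun j hj => sngl_ne (ne_of_not_desc hj) _
  have hWv0' : Valid n (sngl v ((0:ℝ),w)) :=
    valid_sngl hvn (by norm_num) (by simpa using hw0) (by simpa using hw1)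
  have hWch0 : ∀ k, k < d-1 → ∀ j, Desc d (d*v+1+k) j → sngl v ((0:ℝ),w) j = 0 := by
    intro k hk j hj
    apply sngl_ne
    have h1 : d*v+1+k ≤ j := Desc.le (by omega) hj
    have h2 := v_le_dv (d := d) (v := v) (by omega : 1 ≤ d)
    omega
  have hwW0 : weight n (sngl v ((0:ℝ),w)) = w := by rw [weight_sngl hvn]; simp
  -- Phase 1 : children get black a
  have ph1 : Strat d n v (sngl v ((0:ℝ),w))
      (sngl v ((0:ℝ),w) + chsC d v (d-1) (a,(0:ℝ))) P := by
    have hs := seqSibs hd (by omega) (by omega) hchn _ hWs0 hWv0' hWch0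
      (a,(0:ℝ)) 0 ha0 (by norm_num) (by simpa using ha1)
      (by norm_num) (by norm_num) (by norm_num)
      (D*((p:ℝ)+2)/2 + 1 + a/2) P
      (by simp only [Prod.fst_zero, Prod.snd_zero, add_zero]
          nlinarith [mul_nonneg (by linarith : (0:ℝ) ≤ D) (by linarith : (0:ℝ) ≤ (p:ℝ)+2)])
      (fun k hk => by
        rw [sngl_zero]
        exact ihB _ (hch k (by omega)) a ha0 ha1)
      ?_
    · rwa [chsC_zero_val, add_zero] at hs
    · intro k hk
      rw [hwW0, hdm1]
      have hk' := hcastk k hk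
      have hk0 : (0:ℝ) ≤ (k:ℝ) := Nat.cast_nonneg k
      simp only [Prod.fst_zero, Prod.snd_zero]
      norm_num
      nlinarith [mul_le_mul_of_nonneg_right hk' ha0]
  -- Phase 2 : lazy build of the last child
  have ph2 : Strat d n v (sngl v ((0:ℝ),w) + chsC d v (d-1) (a,(0:ℝ)))
      ((sngl v ((0:ℝ),w) + chsC d v (d-1) (a,(0:ℝ)))
        + (sngl (d*v+d) ((1:ℝ),(0:ℝ)) + pend d p (d*v+d))) P := by
    have hZr : ∀ j, ¬ Desc d v j →
        (sngl v ((0:ℝ),w) + chsC d v (d-1) (a,(0:ℝ))) j = 0 := by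
      intro j hj
      simp only [Pi.add_apply, hWs0 j hj, hZrC (a,(0:ℝ)) j hj, add_zero]
    have hZu : ∀ j, Desc d (d*v+d) j →
        (sngl v ((0:ℝ),w) + chsC d v (d-1) (a,(0:ℝ))) j = 0 := by
      intro j hj
      have h1 : j ≠ v := by
        have h2 := Desc.le (by omega : 1 ≤ d) hj
        have := v_le_dv (d := d) (v := v) (by omega : 1 ≤ d)
        omega
      simp only [Pi.add_apply, sngl_ne h1, hZuC (a,(0:ℝ)) j hj, add_zero]
    have hZv : Valid n (sngl v ((0:ℝ),w) + chsC d v (d-1) (a,(0:ℝ))) := by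
      apply valid_add hWv0' (valid_chsC hchn ha0 (by norm_num) (by simpa using ha1))
      intro i
      by_cases hi : i = v
      · right
        rw [hi]
        have hvv := v_le_dv (d := d) (v := v) (by omega : 1 ≤ d)
        exact chsC_out (by omega) _
      · exact Or.inl (sngl_ne hi _)
    have hl := Strat.lift (n := n) (Desc.of_child hlastcC) _ hZr hZu hZv
      (ihL (d*v+d) hlast)
    rw [add_zero] at hl
    apply Strat.mono _ hl
    rw [weight_add, hwW0, weight_chsC hchn, hdm1, hP]
    norm_num
    nlinarith
  -- Phase 3 : top the siblings with white 1-a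
  have ph3 : Strat d n v
      ((sngl v ((0:ℝ),w) + sngl (d*v+d) ((1:ℝ),(0:ℝ)) + pend d p (d*v+d))
        + chsC d v (d-1) (a,(0:ℝ)))
      ((sngl v ((0:ℝ),w) + sngl (d*v+d) ((1:ℝ),(0:ℝ)) + pend d p (d*v+d))
        + chsC d v (d-1) (a,1-a)) P := by
    have hWs : ∀ j, ¬ Desc d v j →
        (sngl v ((0:ℝ),w) + sngl (d*v+d) ((1:ℝ),(0:ℝ)) + pend d p (d*v+d)) j = 0 := by
      intro j hj
      have h1 : sngl (d*v+d) ((1:ℝ),(0:ℝ)) j = 0 := by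
        apply sngl_ne
        intro he
        exact hj (by rw [he]; exact Desc.of_child hlastcC)
      simp only [Pi.add_apply, h1, hWs0 j hj, hPs j hj, add_zero, zero_add]
    have hWv : Valid n (sngl v ((0:ℝ),w) + sngl (d*v+d) ((1:ℝ),(0:ℝ)) + pend d p (d*v+d)) := by
      apply valid_add
      · apply valid_add hWv0' (valid_sngl (by omega) (by norm_num) (by norm_num) (by norm_num))
        intro i
        by_cases hi : i = v
        · right
          rw [hi]
          have hvv := v_le_dv (d := d) (v := v) (by omega : 1 ≤ d)
          exact sngl_ne (by omega) _
        · exact Or.inl (sngl_ne hi _)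
      · exact hPv
      · intro i
        by_cases hi : pend d p (d*v+d) i = 0
        · exact Or.inr hi
        · left
          obtain ⟨hdesc, hlt⟩ := pend_ne (by omega : 1 ≤ d) p (d*v+d) i hi
          have h1 : i ≠ v := by
            have := v_le_dv (d := d) (v := v) (by omega : 1 ≤ d)
            omega
          have h2 : i ≠ d*v+d := by omega
          simp only [Pi.add_apply, sngl_ne h1, sngl_ne h2, add_zero]
    have hWch : ∀ k, k < d-1 → ∀ j, Desc d (d*v+1+k) j →
        (sngl v ((0:ℝ),w) + sngl (d*v+d) ((1:ℝ),(0:ℝ)) + pend d p (d*v+d)) j = 0 := by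
      intro k hk j hj
      have h1 : sngl (d*v+d) ((1:ℝ),(0:ℝ)) j = 0 := by
        apply sngl_ne
        intro he
        subst he
        exact not_desc_of_other_child (by omega : 1 ≤ d) ⟨k, by omega, rfl⟩ hlastcC
          (by omega) hj
      simp only [Pi.add_apply, h1, hWch0 k hk j hj, hPchD k hk j hj, add_zero, zero_add]
    have hwW : weight n (sngl v ((0:ℝ),w) + sngl (d*v+d) ((1:ℝ),(0:ℝ)) + pend d p (d*v+d))
        = w + 1 + (p:ℝ)*D/2 := by
      rw [weight_add, weight_add, hwW0, weight_sngl (by omega), hPwt]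
      norm_num
    apply seqSibs hd (by omega) (by omega) hchn _ hWs hWv hWch
      (a,1-a) (a,(0:ℝ)) ha0 h1a0 (by simp only []; linarith)
      ha0 (by norm_num) (by simpa using ha1) 1 P (by simpa using ha1)
    · intro k hk
      exact whiteStrat (by have := atH_lt_n (by omega : 1 ≤ p+2) (hch k (by omega)); omega)
        (a,(0:ℝ)) (a,1-a) 1 (by norm_num) (by simp only []; linarith) ha0
        (by norm_num) (by simp only []; linarith) (by simp only []; linarith)
    · intro k hk
      rw [hwW, hdm1]
      have hk' := hcastk k hk
      have hk0 : (0:ℝ) ≤ (k:ℝ) := Nat.cast_nonneg k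
      simp only []
      norm_num
      nlinarith [mul_le_mul_of_nonneg_left ha1 (by linarith : (0:ℝ) ≤ (d:ℝ)-2-(k:ℝ)),
        mul_le_mul_of_nonneg_right hk' (by norm_num : (0:ℝ) ≤ 1)]
  -- Phase 4 : cover v, removing the white w
  have ph4 : Strat d n v
      (pend d p (d*v+d) + sngl v ((0:ℝ),w) + chsC d v (d-1) (a,1-a)
        + sngl (d*v+d) ((1:ℝ),(0:ℝ)))
      (pend d p (d*v+d) + sngl v ((0:ℝ),(0:ℝ)) + chsC d v (d-1) ((0:ℝ),1-a)
        + sngl (d*v+d) ((0:ℝ),(0:ℝ))) P := by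
    apply coverStrat hd hvn hcn _ hPs hPv hPv0 hPch
      0 w 0 a (1-a) 1 0 (by ring) (by norm_num)
      (le_refl 0) (le_refl 0) (by norm_num) (by norm_num) hw0 (by simpa using hw1)
      ha0 h1a0 (by norm_num) (by norm_num)
    · rw [hPwt, hP]
      nlinarith
    · rw [hPwt, hP, ← hD]
      nlinarith
  -- Phase 5 : clean the deep pend
  have ph5 : Strat d n v
      (chsC d v (d-1) ((0:ℝ),1-a) + pend d p (d*v+d))
      (chsC d v (d-1) ((0:ℝ),1-a)) P := by
    have hl := Strat.lift (n := n) (Desc.of_child hlastcC) _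
      (hZrC ((0:ℝ),1-a)) (hZuC ((0:ℝ),1-a))
      (valid_chsC hchn (by norm_num) h1a0 (by simp only []; linarith))
      (ihC (d*v+d) hlast)
    rw [add_zero] at hl
    apply Strat.mono _ hl
    rw [weight_chsC hchn, hdm1, hP]
    norm_num
    nlinarith
  -- Phase 6 : remove the sibling whites
  have ph6 : Strat d n v (chsC d v (d-1) ((0:ℝ),1-a)) 0 P := by
    have hs := seqSibs hd (by omega) (by omega) hchn 0 (fun j _ => rfl) (valid_zero n)
      (fun k _ j _ => rfl) 0 ((0:ℝ),1-a) (by norm_num) (by norm_num) (by norm_num)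
      (by norm_num) h1a0 (by simp only []; linarith)
      (D*((p:ℝ)+2)/2 + 1 + (1-a)/2 + (if p = 0 then (1-a)/2 else 0)) P ?_
      (fun k hk => by
        rw [sngl_zero]
        exact ihW _ (hch k (by omega)) (1-a) h1a0 (by linarith))
      ?_
    · rwa [chsC_zero_val, zero_add, zero_add] at hs
    · simp only []
      norm_num
      split_ifs <;>
        nlinarith [mul_nonneg (by linarith : (0:ℝ) ≤ D) (by linarith : (0:ℝ) ≤ (p:ℝ)+2)]
    · intro k hk
      rw [weight_zero, hdm1]
      have hk' := hcastk k hk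
      have hk0 : (0:ℝ) ≤ (k:ℝ) := Nat.cast_nonneg k
      simp only [Prod.fst_zero, Prod.snd_zero]
      norm_num
      split_ifs <;>
        nlinarith [mul_le_mul_of_nonneg_right hk0 h1a0]
  -- assemble
  have e23 : (sngl v ((0:ℝ),w) + chsC d v (d-1) (a,(0:ℝ)))
        + (sngl (d*v+d) ((1:ℝ),(0:ℝ)) + pend d p (d*v+d))
      = (sngl v ((0:ℝ),w) + sngl (d*v+d) ((1:ℝ),(0:ℝ)) + pend d p (d*v+d))
        + chsC d v (d-1) (a,(0:ℝ)) := by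
    abel
  have e34 : (sngl v ((0:ℝ),w) + sngl (d*v+d) ((1:ℝ),(0:ℝ)) + pend d p (d*v+d))
        + chsC d v (d-1) (a,1-a)
      = pend d p (d*v+d) + sngl v ((0:ℝ),w) + chsC d v (d-1) (a,1-a)
        + sngl (d*v+d) ((1:ℝ),(0:ℝ)) := by
    abel
  have e45 : pend d p (d*v+d) + sngl v ((0:ℝ),(0:ℝ)) + chsC d v (d-1) ((0:ℝ),1-a)
        + sngl (d*v+d) ((0:ℝ),(0:ℝ))
      = chsC d v (d-1) ((0:ℝ),1-a) + pend d p (d*v+d) := by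
    simp only [Prod.mk_zero_zero, sngl_zero, add_zero]
    abel
  rw [e23] at ph2
  rw [← e34, e45] at ph4
  exact ((((ph1.trans ph2).trans ph3).trans ph4).trans ph5).trans ph6

end Frac
namespace Frac

theorem quad {d h : ℕ} (hd : 2 ≤ d) :
    ∀ p : ℕ, ∀ v, atH d h v (p+2) →
      (∀ b : ℝ, 0 ≤ b → b ≤ 1 →
        Strat d (treeSize d h) v 0 (sngl v (b,(0:ℝ))) (((d:ℝ)-1)*((p:ℝ)+2)/2 + 1 + b/2)) ∧
      (∀ w : ℝ, 0 ≤ w → w ≤ 1 →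
        Strat d (treeSize d h) v (sngl v ((0:ℝ),w)) 0
          (((d:ℝ)-1)*((p:ℝ)+2)/2 + 1 + w/2 + (if p = 0 then w/2 else 0))) ∧
      Strat d (treeSize d h) v 0 (sngl v ((1:ℝ),(0:ℝ)) + pend d p v)
        (((d:ℝ)-1)*(p:ℝ)/2 + (d:ℝ)) ∧
      Strat d (treeSize d h) v (pend d p v) 0
        (((d:ℝ)-1)*((p:ℝ)+1)/2 + ((d:ℝ)+1)/2) := by
  intro p
  induction p with
  | zero =>
    intro v hv
    have hd1 : (1:ℝ) ≤ (d:ℝ) := by exact_mod_cast (by omega : 1 ≤ d)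
    refine ⟨?_, ?_, ?_, ?_⟩
    · intro b hb0 hb1
      apply Strat.mono _ (base_build hd hv b hb0 hb1)
      norm_num
    · intro w hw0 hw1
      apply Strat.mono _ (base_rem hd hv w hw0 hw1)
      norm_num
    · apply Strat.mono _ (base_lazy hd hv)
      norm_num
    · apply Strat.mono _ (base_clean hd hv)
      norm_num
  | succ p ihp =>
    intro v hv
    have hd1 : (1:ℝ) ≤ (d:ℝ) := by exact_mod_cast (by omega : 1 ≤ d)
    have ihB := fun u hu => (ihp u hu).1
    have ihW := fun u hu => (ihp u hu).2.1
    have ihL := fun u hu => (ihp u hu).2.2.1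
    have ihC := fun u hu => (ihp u hu).2.2.2
    have hv3 : atH d h v (p+3) := hv
    refine ⟨?_, ?_, ?_, ?_⟩
    · intro b hb0 hb1
      apply Strat.mono _ (step_build hd hv3 b hb0 hb1 ihB ihW ihL ihC)
      push_cast
      ring_nf
      exact le_refl _
    · intro w hw0 hw1
      apply Strat.mono _ (step_rem hd hv3 w hw0 hw1 ihB ihW ihL ihC)
      have hne : ¬ (p + 1 = 0) := by omega
      rw [if_neg hne]
      push_cast
      ring_nf
      exact le_refl _
    · apply Strat.mono _ (step_lazy hd hv3 ihB ihL)
      push_cast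
      ring_nf
      exact le_refl _
    · apply Strat.mono _ (step_clean hd hv3 ihW ihC)
      push_cast
      ring_nf
      exact le_refl _

end Frac

/-- a fractional pebbling of the d-ary tree of height h ≥ 3 that
starts with white weight 2E on the root and nothing elsewhere, ends empty, and
never exceeds weight (d-1)h/2 + 1 + E. -/
theorem frac_remove_white_from_root (d h : ℕ) (hd : 2 ≤ d) (hh : 3 ≤ h)
    (E : ℝ) (hE0 : 0 < E) (hE : E ≤ 1 / 2) :
    ∃ T c, Pebbling d (treeSize d h) T c ∧
      (c 0) 0 = (0, 2 * E) ∧ (∀ i, i ≠ 0 → (c 0) i = (0, 0)) ∧ EmptyCfg (c T) ∧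
      ∀ t, t ≤ T → weight (treeSize d h) (c t) ≤ ((d : ℝ) - 1) * h / 2 + 1 + E := by
  have hat : Frac.atH d h 0 ((h-2)+2) := by
    refine ⟨0, by omega, ?_, ?_⟩
    · simp [treeSize]
    · simp [treeSize]
  have hq := (Frac.quad (d := d) (h := h) hd (h-2) 0 hat).2.1 (2*E)
    (by linarith) (by linarith)
  obtain ⟨T, cs, e0, e1, hm, hb⟩ := hq 0 (Frac.valid_zero _) (fun j _ => rfl)
  refine ⟨T, cs, ⟨fun t ht => (hb t ht).1, hm⟩, ?_, ?_, ?_, ?_⟩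
  · rw [e0]
    simp [Frac.sngl]
  · intro i hi
    rw [e0]
    simp only [Pi.add_apply, Frac.sngl_ne hi, Pi.zero_apply, add_zero]
    exact Prod.mk_zero_zero.symm
  · intro i
    rw [e1]
    simp only [Pi.add_apply, Pi.zero_apply, add_zero]
    exact Prod.mk_zero_zero.symm
  · intro t ht
    have hw := (hb t ht).2.1
    rw [Frac.weight_zero] at hw
    have hcast : ((h-2:ℕ):ℝ) = (h:ℝ) - 2 := by
      have := Nat.cast_sub (R := ℝ) (by omega : 2 ≤ h)
      simpa using this
    rw [hcast] at hw
    have hE2 : 2*E/2 = E := by ring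
    calc weight (treeSize d h) (cs t) ≤ 0 + (((d:ℝ)-1)*(((h:ℝ)-2)+2)/2 + 1 + 2*E/2
        + (if h-2 = 0 then 2*E/2 else 0)) := hw
      _ = ((d : ℝ) - 1) * h / 2 + 1 + E := by
        rw [if_neg (by omega : ¬ (h-2 = 0))]
        ring
end

section
/- In the fractional pebbling game on the balanced d-ary tree of height 3 (d ≥ 2), suppose a pebbling never increases the black pebble weight of any child of the root before a time t* at which all d children of the root have pebble weight 1, and the initial black weight in the subtrees is at most 1−ε for ε ∈ (−1/2,1/2]. Then the white weight on the children of the root at time t* is at least d−1+ε, and at the first time after t* at which any of this white weight is removed, the total subtree weight is at least 2d−1+ε. -/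
/-- on the d-ary tree of height 3, if the black weight of the
root's children never increases before a time t* at which all children have
pebble weight 1, and the initial black subtree weight is at most 1-ε, then the
white weight on the children at t* is at least d-1+ε, and at the first time
after t* at which any of this white weight is removed the subtree weight is at
least 2d-1+ε. -/
theorem frac_base_no_black_increase (d : ℕ) (hd : 2 ≤ d)
    (ε : ℝ) (hε1 : -(1 / 2) < ε) (hε2 : ε ≤ 1 / 2)
    (T : ℕ) (c : ℕ → Cfg) (tstar : ℕ)
    (hp : Pebbling d (treeSize d 3) T c)
    (ht : tstar ≤ T)
    (hcov : ∀ j, child d 0 j → pw (c tstar) j = 1)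
    (hinit : (∑ i ∈ Finset.Ico 1 (treeSize d 3), ((c 0) i).1) ≤ 1 - ε)
    (hnoinc : ∀ t, t < tstar → ∀ j, child d 0 j → ((c (t + 1)) j).1 ≤ ((c t) j).1) :
    ((d : ℝ) - 1 + ε ≤ ∑ j ∈ Finset.Icc 1 d, ((c tstar) j).2) ∧
    ∀ s, tstar ≤ s → s < T →
      (∃ j ∈ Finset.Icc 1 d, ((c (s + 1)) j).2 < ((c s) j).2) →
      (∀ s', tstar ≤ s' → s' < s → ∀ j ∈ Finset.Icc 1 d, ((c s') j).2 ≤ ((c (s' + 1)) j).2) →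
      2 * (d : ℝ) - 1 + ε ≤ ∑ i ∈ Finset.Ico 1 (treeSize d 3), pw (c s) i := by

  obtain ⟨hvalid, hmove⟩ := hp
  have hn : treeSize d 3 = d * d + d + 1 := by
    simp [treeSize, Finset.sum_range_succ]; ring
  have hchild0 : ∀ j, child d 0 j ↔ j ∈ Finset.Icc 1 d := by
    intro j
    constructor
    · rintro ⟨k, hk, rfl⟩; simp; omega
    · intro hj; simp only [Finset.mem_Icc] at hj; exact ⟨j - 1, by omega, by omega⟩
  -- pebble weights are nonnegative
  have hpwnn : ∀ t, t ≤ T → ∀ i, (0:ℝ) ≤ pw (c t) i := by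
    intro t htT i
    have h := (hvalid t htT).1 i
    simp only [pw]; linarith [h.1, h.2.1]
  -- Part 1
  have hpw1 : ∀ j ∈ Finset.Icc 1 d, pw (c tstar) j = 1 := by
    intro j hj; exact hcov j ((hchild0 j).mpr hj)
  have hblackmono : ∀ j ∈ Finset.Icc 1 d, ∀ t, t ≤ tstar → (c t j).1 ≤ (c 0 j).1 := by
    intro j hj t
    induction t with
    | zero => intro _; exact le_refl _
    | succ t ih =>
      intro ht'
      have h1 := hnoinc t (by omega) j ((hchild0 j).mpr hj)
      exact h1.trans (ih (by omega))
  have hbsum : (∑ j ∈ Finset.Icc 1 d, ((c tstar) j).1) ≤ 1 - ε := by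
    calc ∑ j ∈ Finset.Icc 1 d, ((c tstar) j).1
        ≤ ∑ j ∈ Finset.Icc 1 d, ((c 0) j).1 :=
          Finset.sum_le_sum (fun j hj => hblackmono j hj tstar le_rfl)
      _ ≤ ∑ i ∈ Finset.Ico 1 (treeSize d 3), ((c 0) i).1 := by
          apply Finset.sum_le_sum_of_subset_of_nonneg
          · intro x hx
            simp only [Finset.mem_Icc] at hx
            simp only [Finset.mem_Ico]
            omega
          · intro i _ _; exact ((hvalid 0 (by omega)).1 i).1
      _ ≤ 1 - ε := hinit
  have hpwsum : (∑ j ∈ Finset.Icc 1 d, pw (c tstar) j) = (d : ℝ) := by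
    rw [Finset.sum_congr rfl hpw1]
    simp [Nat.card_Icc]
  have part1 : (d : ℝ) - 1 + ε ≤ ∑ j ∈ Finset.Icc 1 d, ((c tstar) j).2 := by
    have hsplit : (∑ j ∈ Finset.Icc 1 d, pw (c tstar) j)
        = (∑ j ∈ Finset.Icc 1 d, ((c tstar) j).1)
          + ∑ j ∈ Finset.Icc 1 d, ((c tstar) j).2 := by
      rw [← Finset.sum_add_distrib]
      exact Finset.sum_congr rfl (fun j _ => rfl)
    rw [hpwsum] at hsplit
    linarith
  refine ⟨part1, ?_⟩
  intro s hts hsT hex hmono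
  obtain ⟨j0, hj0mem, hdec⟩ := hex
  have hj0 : 1 ≤ j0 ∧ j0 ≤ d := by simpa [Finset.mem_Icc] using hj0mem
  -- white weight on the children did not decrease between tstar and s
  have hwhitemono : ∀ j ∈ Finset.Icc 1 d, ((c tstar) j).2 ≤ ((c s) j).2 := by
    intro j hj
    have key : ∀ u, tstar ≤ u → u ≤ s → ((c tstar) j).2 ≤ ((c u) j).2 := by
      intro u hu
      induction u, hu using Nat.le_induction with
      | base => intro _; exact le_refl _
      | succ u hu ih =>
        intro hus
        exact (ih (by omega)).trans (hmono u hu (by omega) j hj)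
    exact key s hts le_rfl
  -- the move at time s must be a type-2 move on j0
  have hcovj0 : covered d (c s) j0 := by
    have hm := hmove s hsT
    rcases hm with ⟨i, _, hw, hoth⟩ | ⟨i, hin, hc, _, hw0, hch, hoth⟩ |
        ⟨i, _, hw, hoth⟩ | ⟨i, _, hw, _, hoth⟩
    · by_cases h : j0 = i
      · subst h; rw [hw] at hdec; exact absurd hdec (lt_irrefl _)
      · rw [hoth j0 h] at hdec; exact absurd hdec (lt_irrefl _)
    · have hij : j0 = i := by
        by_contra h
        by_cases hch' : child d i j0
        · rw [(hch j0 hch').2] at hdec; exact absurd hdec (lt_irrefl _)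
        · rw [hoth j0 h hch'] at hdec; exact absurd hdec (lt_irrefl _)
      subst hij; exact hc
    · by_cases h : j0 = i
      · subst h; exact absurd (lt_of_le_of_lt hw hdec) (lt_irrefl _)
      · rw [hoth j0 h] at hdec; exact absurd hdec (lt_irrefl _)
    · by_cases h : j0 = i
      · subst h; rw [hw] at hdec; exact absurd hdec (lt_irrefl _)
      · rw [hoth j0 h] at hdec; exact absurd hdec (lt_irrefl _)
  -- the grandchildren below j0 each have pebble weight 1
  set S2 := Finset.Icc (d * j0 + 1) (d * j0 + d) with hS2
  have hpw2 : ∀ i ∈ S2, pw (c s) i = 1 := by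
    intro i hi
    simp only [hS2, Finset.mem_Icc] at hi
    exact hcovj0 i ⟨i - (d * j0 + 1), by omega, by omega⟩
  have hdisj : Disjoint (Finset.Icc 1 d) S2 := by
    rw [Finset.disjoint_left]
    intro x hx hx2
    simp only [Finset.mem_Icc] at hx
    simp only [hS2, Finset.mem_Icc] at hx2
    have : d * 1 ≤ d * j0 := Nat.mul_le_mul_left d hj0.1
    omega
  have hs2sum : (∑ i ∈ S2, pw (c s) i) = (d : ℝ) := by
    rw [Finset.sum_congr rfl hpw2]
    simp [hS2, Nat.card_Icc]
  have hsub : Finset.Icc 1 d ∪ S2 ⊆ Finset.Ico 1 (treeSize d 3) := by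
    intro x hx
    have hdd : d * j0 ≤ d * d := Nat.mul_le_mul_left d hj0.2
    simp only [Finset.mem_union, Finset.mem_Icc, hS2] at hx
    simp only [Finset.mem_Ico]
    omega
  have hsT' : s ≤ T := le_of_lt hsT
  calc 2 * (d : ℝ) - 1 + ε
      ≤ (∑ j ∈ Finset.Icc 1 d, pw (c s) j) + ∑ i ∈ S2, pw (c s) i := by
        have h1 : (d : ℝ) - 1 + ε ≤ ∑ j ∈ Finset.Icc 1 d, pw (c s) j := by
          have h2 : (∑ j ∈ Finset.Icc 1 d, ((c s) j).2)
              ≤ ∑ j ∈ Finset.Icc 1 d, pw (c s) j := by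
            apply Finset.sum_le_sum
            intro j hj
            have := ((hvalid s hsT').1 j).1
            simp only [pw]; linarith
          have h3 : (∑ j ∈ Finset.Icc 1 d, ((c tstar) j).2)
              ≤ ∑ j ∈ Finset.Icc 1 d, ((c s) j).2 :=
            Finset.sum_le_sum hwhitemono
          linarith
        rw [hs2sum]; linarith
    _ = ∑ i ∈ Finset.Icc 1 d ∪ S2, pw (c s) i := (Finset.sum_union hdisj).symm
    _ ≤ ∑ i ∈ Finset.Ico 1 (treeSize d 3), pw (c s) i := by
        apply Finset.sum_le_sum_of_subset_of_nonneg hsub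
        intro i _ _
        exact hpwnn s hsT' i
end

section
/- In the whole black-white pebbling game on the balanced binary tree of height h+2 (h ≥ 2), assume inductively that every root-pebbling of the height-h tree requires weight at least h/2+1 at some time. Then every root-pebbling of the height-(h+2) tree requires weight at least h/2+2 at some time. -/
/-- A black-white configuration: each node gets (black, white) ∈ {0,1}². -/
abbrev BWCfg := ℕ → Bool × Bool

/-- Pebble weight of node i. -/
def bwpw (c : BWCfg) (i : ℕ) : ℕ :=
  (if (c i).1 then 1 else 0) + (if (c i).2 then 1 else 0)

/-- b(i) + w(i) ≤ 1 for all nodes. -/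
def bwValid (c : BWCfg) : Prop := ∀ i, ¬((c i).1 = true ∧ (c i).2 = true)

def bwweight (n : ℕ) (c : BWCfg) : ℕ := ∑ i ∈ Finset.range n, bwpw c i

/-- Every child of i has pebble weight 1. -/
def bwcovered (d : ℕ) (c : BWCfg) (i : ℕ) : Prop := ∀ j, child d i j → bwpw c j = 1

/-- Legal whole black-white pebbling moves: remove a black pebble; on a node
whose children all have pebble weight 1, set w(i)=0 and/or set b(i)=1, optionally
simultaneously removing black pebbles from any children; place a white pebble
anywhere; place a black pebble on any leaf. -/
def BWMove (d n : ℕ) (c c' : BWCfg) : Prop :=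
  (∃ i, c' = Function.update c i (false, (c i).2)) ∨
  (∃ i, i < n ∧ bwcovered d c i ∧ (c' i = (true, false) ∨ c' i = ((c i).1, false)) ∧
    (∀ j, child d i j → (c' j = c j ∨ c' j = (false, (c j).2))) ∧
    (∀ j, j ≠ i → ¬ child d i j → c' j = c j)) ∨
  (∃ i, i < n ∧ c' = Function.update c i ((c i).1, true)) ∨
  (∃ i, isLeaf d n i ∧ c' = Function.update c i (true, (c i).2))

def BWPebbling (d n T : ℕ) (c : ℕ → BWCfg) : Prop :=
  (∀ t, t ≤ T → bwValid (c t)) ∧ (∀ t, t < T → BWMove d n (c t) (c (t + 1)))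

def BWEmpty (c : BWCfg) : Prop := ∀ i, c i = (false, false)

/-- Root-pebbling: starts and ends empty; at some time the root has pebble weight 1. -/
def BWRootPebbling (d n T : ℕ) (c : ℕ → BWCfg) : Prop :=
  BWPebbling d n T c ∧ BWEmpty (c 0) ∧ BWEmpty (c T) ∧ ∃ t, t ≤ T ∧ bwpw (c t) 0 = 1
namespace BW17

lemma ts_add_one (j : ℕ) : treeSize 2 j + 1 = 2 ^ j := by
  induction j with
  | zero => simp [treeSize]
  | succ j ih =>
    have h : treeSize 2 (j+1) = treeSize 2 j + 2 ^ j := Finset.sum_range_succ _ _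
    have h2 : 2 ^ (j+1) = 2 ^ j * 2 := pow_succ 2 j
    omega

lemma child2_iff (i j : ℕ) : child 2 i j ↔ j = 2*i+1 ∨ j = 2*i+2 := by
  constructor
  · rintro ⟨k, hk, rfl⟩; omega
  · rintro (rfl | rfl)
    · exact ⟨0, by omega, by ring⟩
    · exact ⟨1, by omega, by ring⟩

def emb (v : ℕ) : ℕ → ℕ
  | 0 => v
  | k + 1 => 2 * emb v (k / 2) + 1 + k % 2
  decreasing_by omega

lemma emb_zero (v : ℕ) : emb v 0 = v := by rw [emb]

lemma emb_succ (v k : ℕ) : emb v (k+1) = 2 * emb v (k / 2) + 1 + k % 2 := by rw [emb]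

lemma emb_left (v k : ℕ) : emb v (2*k+1) = 2 * emb v k + 1 := by
  have h := emb_succ v (2*k)
  have h1 : 2*k/2 = k := by omega
  have h2 : 2*k % 2 = 0 := by omega
  rw [h1, h2] at h; omega

lemma emb_right (v k : ℕ) : emb v (2*k+2) = 2 * emb v k + 2 := by
  have e : 2*k+2 = (2*k+1)+1 := by ring
  rw [e, emb_succ v (2*k+1)]
  have h1 : (2*k+1)/2 = k := by omega
  have h2 : (2*k+1) % 2 = 1 := by omega
  rw [h1, h2]

lemma emb_spec (v : ℕ) : ∀ k : ℕ, ∃ L, 2^L ≤ k+1 ∧ k+1 < 2^(L+1) ∧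
    emb v k + 1 + 2^L = (v+1) * 2^L + (k+1) := by
  intro k
  induction k using Nat.strong_induction_on with
  | _ k ih =>
    match k with
    | 0 => refine ⟨0, by norm_num, by norm_num, ?_⟩; simp [emb_zero]
    | k + 1 =>
      obtain ⟨L, h1, h2, h3⟩ := ih (k/2) (by omega)
      have e1 : 2 ^ (L+1) = 2 * 2^L := by rw [pow_succ]; ring
      have e2 : 2 ^ (L+1+1) = 2 * (2 * 2^L) := by rw [pow_succ, pow_succ]; ring
      have e3 : (v+1) * 2^(L+1) = 2 * ((v+1) * 2^L) := by rw [pow_succ]; ring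
      refine ⟨L+1, by omega, by omega, ?_⟩
      have h4 := emb_succ v k
      omega

lemma pow_interval_uniq_aux {w w' L L' x : ℕ} (hw : 4 ≤ w) (hw8 : w < 8)
    (hw' : 4 ≤ w') (hw8' : w' < 8) (hLL : L ≤ L')
    (h1 : w * 2^L ≤ x) (h2 : x < (w+1) * 2^L)
    (h1' : w' * 2^L' ≤ x) (h2' : x < (w'+1) * 2^L') : L = L' := by
  by_contra hne
  have hL : L + 1 ≤ L' := by omega
  have hp : (2:ℕ)^(L+1) ≤ 2^L' := Nat.pow_le_pow_right (by norm_num) hL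
  have e1 : (2:ℕ) ^ (L+1) = 2 * 2^L := by rw [pow_succ]; ring
  have hx1 : x < 8 * 2^L := by
    calc x < (w+1) * 2^L := h2
    _ ≤ 8 * 2^L := Nat.mul_le_mul_right _ (by omega)
  have hx2 : 4 * 2^L' ≤ x := le_trans (Nat.mul_le_mul_right _ hw') h1'
  omega

lemma pow_interval_uniq {w w' L L' x : ℕ} (hw : 4 ≤ w) (hw8 : w < 8)
    (hw' : 4 ≤ w') (hw8' : w' < 8)
    (h1 : w * 2^L ≤ x) (h2 : x < (w+1) * 2^L)
    (h1' : w' * 2^L' ≤ x) (h2' : x < (w'+1) * 2^L') : w = w' ∧ L = L' := by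
  have hL : L = L' := by
    rcases le_total L L' with h | h
    · exact pow_interval_uniq_aux hw hw8 hw' hw8' h h1 h2 h1' h2'
    · exact (pow_interval_uniq_aux hw' hw8' hw hw8 h h1' h2' h1 h2).symm
  subst hL
  have hp : 0 < (2:ℕ)^L := Nat.pow_pos (by norm_num)
  have hww : w < w' + 1 := by
    have : 2^L * w < 2^L * (w'+1) := by
      rw [Nat.mul_comm (2^L) w, Nat.mul_comm (2^L) (w'+1)]; omega
    exact Nat.lt_of_mul_lt_mul_left this
  have hww' : w' < w + 1 := by
    have : 2^L * w' < 2^L * (w+1) := by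
      rw [Nat.mul_comm (2^L) w', Nat.mul_comm (2^L) (w+1)]; omega
    exact Nat.lt_of_mul_lt_mul_left this
  omega

end BW17
namespace BW17

lemma emb_bounds (v k : ℕ) (hv6 : v ≤ 6) :
    ∃ L, 2^L ≤ k+1 ∧ k+1 < 2^(L+1) ∧ (v+1) * 2^L ≤ emb v k + 1 ∧
      emb v k + 1 < (v+1+1) * 2^L ∧ emb v k + 1 + 2^L = (v+1) * 2^L + (k+1) := by
  obtain ⟨L, h1, h2, h3⟩ := emb_spec v k
  have e1 : (2:ℕ) ^ (L+1) = 2 * 2^L := by rw [pow_succ]; ring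
  have e2 : (v+1+1) * 2^L = (v+1) * 2^L + 2^L := by ring
  exact ⟨L, h1, h2, by omega, by omega, h3⟩

lemma emb_inj {v v' k k' : ℕ} (hv3 : 3 ≤ v) (hv6 : v ≤ 6) (hv3' : 3 ≤ v') (hv6' : v' ≤ 6)
    (h : emb v k = emb v' k') : v = v' ∧ k = k' := by
  obtain ⟨L, a1, a2, a3, a4, a5⟩ := emb_bounds v k hv6
  obtain ⟨L', b1, b2, b3, b4, b5⟩ := emb_bounds v' k' hv6'
  rw [h] at a3 a4 a5
  obtain ⟨hw, hL⟩ := pow_interval_uniq (w := v+1) (w' := v'+1) (x := emb v' k' + 1)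
    (by omega) (by omega) (by omega) (by omega) a3 a4 b3 b4
  have hv : v = v' := by omega
  subst hv; subst hL
  exact ⟨rfl, by omega⟩

lemma emb_ge8 {v k : ℕ} (hv3 : 3 ≤ v) (hv6 : v ≤ 6) (hk : 1 ≤ k) : 8 ≤ emb v k + 1 := by
  obtain ⟨L, a1, a2, a3, a4⟩ := emb_bounds v k hv6
  have hL : 1 ≤ L := by
    by_contra hL
    interval_cases L <;> omega
  have h1 : (2:ℕ) ≤ 2^L := by
    calc (2:ℕ) = 2^1 := by norm_num
    _ ≤ 2^L := Nat.pow_le_pow_right (by norm_num) hL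
  have : (v+1) * 2 ≤ (v+1) * 2^L := Nat.mul_le_mul_left _ h1
  omega

lemma emb_ne_small {v x : ℕ} (hv3 : 3 ≤ v) (hv6 : v ≤ 6) (hx : x ≤ 6) (hxv : x ≠ v) :
    ∀ k, emb v k ≠ x := by
  intro k
  rcases Nat.eq_zero_or_pos k with rfl | hk
  · rw [emb_zero]; omega
  · have := emb_ge8 hv3 hv6 hk; omega

lemma emb_cross {v v' : ℕ} (hv3 : 3 ≤ v) (hv6 : v ≤ 6) (hv3' : 3 ≤ v') (hv6' : v' ≤ 6)
    (hne : v ≠ v') : ∀ k k', emb v k ≠ emb v' k' := by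
  intro k k' h
  exact hne (emb_inj hv3 hv6 hv3' hv6' h).1

lemma emb_lt_ts {m v k : ℕ} (hv6 : v ≤ 6) (hk : k < treeSize 2 (m+2)) :
    emb v k < treeSize 2 (m+4) := by
  obtain ⟨L, a1, a2, a3, a4⟩ := emb_bounds v k hv6
  have t1 := ts_add_one (m+2)
  have t2 := ts_add_one (m+4)
  have hkk : k + 1 < 2^(m+2) := by omega
  have hL : L ≤ m+1 := by
    by_contra hL
    have : (2:ℕ)^(m+2) ≤ 2^L := Nat.pow_le_pow_right (by norm_num) (by omega)
    omega
  have h8 : (v+1+1) * 2^L ≤ 8 * 2^L := Nat.mul_le_mul_right _ (by omega)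
  have h9 : (8:ℕ) * 2^L ≤ 8 * 2^(m+1) := Nat.mul_le_mul_left _ (Nat.pow_le_pow_right (by norm_num) hL)
  have h10 : (8:ℕ) * 2^(m+1) = 2^(m+4) := by
    rw [show m+4 = (m+1)+3 by omega, pow_add]; ring
  omega

lemma emb_leaf_iff {m v k : ℕ} (hv3 : 3 ≤ v) (hv6 : v ≤ 6) (hk : k < treeSize 2 (m+2)) :
    (treeSize 2 (m+2) ≤ 2*k+1) ↔ (treeSize 2 (m+4) ≤ 2 * emb v k + 1) := by
  obtain ⟨L, a1, a2, a3, a4⟩ := emb_bounds v k hv6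
  have t1 := ts_add_one (m+2)
  have t2 := ts_add_one (m+4)
  have hkk : k + 1 < 2^(m+2) := by omega
  have hL : L ≤ m+1 := by
    by_contra hL
    have : (2:ℕ)^(m+2) ≤ 2^L := Nat.pow_le_pow_right (by norm_num) (by omega)
    omega
  have hm2 : (2:ℕ)^(m+2) = 2 * 2^(m+1) := by rw [pow_succ]; ring
  have hm4 : (2:ℕ)^(m+4) = 2 * (2^(m+3)) := by rw [pow_succ]; ring
  constructor
  · intro hleaf
    -- 2^(m+1) ≤ k+1, so L = m+1
    have hk1 : 2^(m+1) ≤ k+1 := by omega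
    have hLe : L = m+1 := by
      by_contra hne
      have hLm : L + 1 ≤ m + 1 := by omega
      have : (2:ℕ)^(L+1) ≤ 2^(m+1) := Nat.pow_le_pow_right (by norm_num) hLm
      omega
    subst hLe
    have h1 : (4:ℕ) * 2^(m+1) ≤ (v+1) * 2^(m+1) := Nat.mul_le_mul_right _ (by omega)
    have h2 : (4:ℕ) * 2^(m+1) = 2^(m+3) := by
      rw [show m+3 = (m+1)+2 by omega, pow_add]; ring
    omega
  · intro hleaf
    -- emb v k + 1 ≥ 2^(m+3), need L = m+1
    have hLe : L = m+1 := by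
      by_contra hne
      have hLm : L ≤ m := by omega
      have h8 : (v+1+1) * 2^L ≤ 8 * 2^L := Nat.mul_le_mul_right _ (by omega)
      have h9 : (8:ℕ) * 2^L ≤ 8 * 2^m := Nat.mul_le_mul_left _ (Nat.pow_le_pow_right (by norm_num) hLm)
      have h10 : (8:ℕ) * 2^m = 2^(m+3) := by
        rw [show m+3 = m+3 by rfl, pow_add]; ring
      omega
    subst hLe
    have e1 : (2:ℕ)^(m+1+1) = 2 * 2^(m+1) := by rw [pow_succ]; ring
    omega

lemma emb_child_decomp {v k : ℕ} (hk : 1 ≤ k) :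
    ∃ p e, p + 1 ≤ k ∧ e < 2 ∧ emb v k = 2 * emb v p + 1 + e := by
  rcases k with _ | k
  · omega
  · exact ⟨k/2, k % 2, by omega, by omega, emb_succ v k⟩

end BW17
namespace BW17

lemma pw_of_empty {c : BWCfg} {i : ℕ} (h : c i = (false, false)) : bwpw c i = 0 := by
  unfold bwpw; simp [h]

lemma pw_zero_iff {c : BWCfg} {i : ℕ} : bwpw c i = 0 ↔ c i = (false, false) := by
  constructor
  · intro h
    unfold bwpw at h
    rcases hc : c i with ⟨b, w⟩
    rw [hc] at h
    cases b <;> cases w <;> simp_all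
  · exact pw_of_empty

lemma pw_true1 {c : BWCfg} {i : ℕ} (h : (c i).1 = true) : 1 ≤ bwpw c i := by
  unfold bwpw; simp [h]

lemma pw_true2 {c : BWCfg} {i : ℕ} (h : (c i).2 = true) : 1 ≤ bwpw c i := by
  unfold bwpw; rw [h]; simp

lemma pw_cases {c : BWCfg} {i : ℕ} (h : bwpw c i = 1) :
    (c i).1 = true ∨ (c i).2 = true := by
  unfold bwpw at h
  rcases h1 : (c i).1 <;> rcases h2 : (c i).2 <;> simp_all

lemma move_refl (d n : ℕ) (c : BWCfg) (i : ℕ) (hi : (c i).1 = false) : BWMove d n c c := by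
  left
  refine ⟨i, ?_⟩
  have h : ((false : Bool), (c i).2) = c i := by rw [← hi]
  rw [h, Function.update_eq_self]

lemma out_empty {N T : ℕ} {c : ℕ → BWCfg} (hP : BWPebbling 2 N T c) (h0 : BWEmpty (c 0)) :
    ∀ t, t ≤ T → ∀ j, N ≤ j → c t j = (false, false) := by
  intro t
  induction t with
  | zero => intro _ j _; exact h0 j
  | succ t ih =>
    intro ht j hj
    have ihj : ∀ j, N ≤ j → c t j = (false, false) := ih (by omega)
    rcases hP.2 t (by omega) with ⟨i, hc'⟩ | ⟨i, hiN, _, _, hch, hoth⟩ | ⟨i, hiN, hc'⟩ | ⟨i, hleaf, hc'⟩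
    · rw [hc']
      by_cases hij : i = j
      · subst hij; rw [Function.update_self, ihj i hj]
      · rw [Function.update_of_ne (Ne.symm hij)]; exact ihj j hj
    · by_cases hij : j = i
      · omega
      · by_cases hcj : child 2 i j
        · rcases hch j hcj with h | h
          · rw [h]; exact ihj j hj
          · rw [h, (ihj j hj)]
        · rw [hoth j hij hcj]; exact ihj j hj
    · rw [hc']
      have hij : i ≠ j := by omega
      rw [Function.update_of_ne (Ne.symm hij)]; exact ihj j hj
    · rw [hc']
      have hij : i ≠ j := by have := hleaf.1; omega
      rw [Function.update_of_ne (Ne.symm hij)]; exact ihj j hj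

lemma black_create_covered {N : ℕ} {c c' : BWCfg} {x : ℕ} (hx : 2*x+1 < N)
    (hm : BWMove 2 N c c') (h1 : (c x).1 = false) (h2 : (c' x).1 = true) :
    bwcovered 2 c x := by
  rcases hm with ⟨i, hc'⟩ | ⟨i, hiN, hcov, hctr, hch, hoth⟩ | ⟨i, hiN, hc'⟩ | ⟨i, hleaf, hc'⟩
  · exfalso; rw [hc'] at h2
    by_cases hix : i = x
    · subst hix; rw [Function.update_self] at h2; simp at h2
    · rw [Function.update_of_ne (Ne.symm hix)] at h2; rw [h1] at h2; simp at h2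
  · by_cases hix : i = x
    · subst hix; exact hcov
    · exfalso
      by_cases hcx : child 2 i x
      · rcases hch x hcx with h | h
        · rw [h, h1] at h2; simp at h2
        · rw [h] at h2; simp at h2
      · rw [hoth x (fun he => hix he.symm) hcx, h1] at h2; simp at h2
  · exfalso; rw [hc'] at h2
    by_cases hix : i = x
    · subst hix; rw [Function.update_self] at h2; simp at h2; rw [h1] at h2; simp at h2
    · rw [Function.update_of_ne (Ne.symm hix)] at h2; rw [h1] at h2; simp at h2
  · exfalso; rw [hc'] at h2
    by_cases hix : i = x
    · subst hix; have := hleaf.2; omega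
    · rw [Function.update_of_ne (Ne.symm hix)] at h2; rw [h1] at h2; simp at h2

lemma white_remove_covered {N : ℕ} {c c' : BWCfg} {x : ℕ}
    (hm : BWMove 2 N c c') (h1 : (c x).2 = true) (h2 : (c' x).2 = false) :
    bwcovered 2 c x := by
  rcases hm with ⟨i, hc'⟩ | ⟨i, hiN, hcov, hctr, hch, hoth⟩ | ⟨i, hiN, hc'⟩ | ⟨i, hleaf, hc'⟩
  · exfalso; rw [hc'] at h2
    by_cases hix : i = x
    · subst hix; rw [Function.update_self] at h2; simp at h2; rw [h1] at h2; simp at h2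
    · rw [Function.update_of_ne (Ne.symm hix)] at h2; rw [h1] at h2; simp at h2
  · by_cases hix : i = x
    · subst hix; exact hcov
    · exfalso
      by_cases hcx : child 2 i x
      · rcases hch x hcx with h | h
        · rw [h, h1] at h2; simp at h2
        · rw [h] at h2; simp at h2; rw [h1] at h2; simp at h2
      · rw [hoth x (fun he => hix he.symm) hcx, h1] at h2; simp at h2
  · exfalso; rw [hc'] at h2
    by_cases hix : i = x
    · subst hix; rw [Function.update_self] at h2; simp at h2
    · rw [Function.update_of_ne (Ne.symm hix)] at h2; rw [h1] at h2; simp at h2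
  · exfalso; rw [hc'] at h2
    by_cases hix : i = x
    · subst hix; rw [Function.update_self] at h2; simp at h2; rw [h1] at h2; simp at h2
    · rw [Function.update_of_ne (Ne.symm hix)] at h2; rw [h1] at h2; simp at h2

lemma cov_of_pebbled {N T x t : ℕ} {c : ℕ → BWCfg} (hx : 2*x+1 < N)
    (hP : BWPebbling 2 N T c) (h0 : BWEmpty (c 0)) (hT : BWEmpty (c T))
    (ht : t ≤ T) (hpw : bwpw (c t) x = 1) :
    ∃ τ, τ ≤ T ∧ bwcovered 2 (c τ) x ∧
      ∀ s, min τ t ≤ s → s ≤ max τ t → s ≠ τ → 1 ≤ bwpw (c s) x := by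
  classical
  rcases pw_cases hpw with hb | hw
  · -- black pebble: look backwards
    have hP0 : (c 0 x).1 = false := by rw [h0 x]
    have hPτ : (c (Nat.findGreatest (fun s => (c s x).1 = false) t) x).1 = false :=
      Nat.findGreatest_spec (P := fun s => (c s x).1 = false) (Nat.zero_le t) hP0
    have hτt : Nat.findGreatest (fun s => (c s x).1 = false) t ≤ t := Nat.findGreatest_le t
    have hgr : ∀ s, Nat.findGreatest (fun s => (c s x).1 = false) t < s → s ≤ t →
        (c s x).1 = true := by
      intro s h1 h2
      have := Nat.findGreatest_is_greatest h1 h2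
      simpa using this
    have hτlt : Nat.findGreatest (fun s => (c s x).1 = false) t < t := by
      rcases Nat.lt_or_ge (Nat.findGreatest (fun s => (c s x).1 = false) t) t with h | h
      · exact h
      · exfalso
        have heq : Nat.findGreatest (fun s => (c s x).1 = false) t = t := le_antisymm hτt h
        rw [heq, hb] at hPτ; simp at hPτ
    have hcov : bwcovered 2 (c (Nat.findGreatest (fun s => (c s x).1 = false) t)) x :=
      black_create_covered hx (hP.2 _ (by omega)) hPτ (hgr _ (by omega) (by omega))
    refine ⟨_, by omega, hcov, ?_⟩
    intro s hs1 hs2 hs3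
    have h1 : Nat.findGreatest (fun s => (c s x).1 = false) t < s := by omega
    have h2 : s ≤ t := by omega
    exact pw_true1 (hgr s h1 h2)
  · -- white pebble: look forwards
    have hTw : (c T x).2 = false := by rw [hT x]
    have hex : ∃ s, t ≤ s ∧ (c s x).2 = false := ⟨T, ht, hTw⟩
    obtain ⟨hbt, hbw⟩ := Nat.find_spec hex
    have hbT : Nat.find hex ≤ T := Nat.find_min' hex ⟨ht, hTw⟩
    have hmin : ∀ s, t ≤ s → s < Nat.find hex → (c s x).2 = true := by
      intro s h1 h2
      have h3 := Nat.find_min hex h2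
      simp only [not_and] at h3
      have h4 := h3 h1
      revert h4; cases (c s x).2 <;> simp
    have htb : t < Nat.find hex := by
      rcases Nat.lt_or_ge t (Nat.find hex) with h | h
      · exact h
      · exfalso
        have heq : Nat.find hex = t := le_antisymm h hbt
        rw [heq, hw] at hbw; simp at hbw
    have hτ : Nat.find hex - 1 + 1 = Nat.find hex := by omega
    have hwb : (c (Nat.find hex - 1) x).2 = true := hmin _ (by omega) (by omega)
    have hcov : bwcovered 2 (c (Nat.find hex - 1)) x := by
      apply white_remove_covered (hP.2 (Nat.find hex - 1) (by omega)) hwb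
      rw [hτ]; exact hbw
    refine ⟨Nat.find hex - 1, by omega, hcov, ?_⟩
    intro s hs1 hs2 hs3
    exact pw_true2 (hmin s (by omega) (by omega))

end BW17
namespace BW17

def restr (n v : ℕ) (c : BWCfg) : BWCfg :=
  fun k => if k < n then c (emb v k) else (false, false)

lemma restr_lt {n v k : ℕ} (c : BWCfg) (hk : k < n) : restr n v c k = c (emb v k) :=
  if_pos hk

lemma restr_ge {n v k : ℕ} (c : BWCfg) (hk : n ≤ k) : restr n v c k = (false, false) :=
  if_neg (by omega)

lemma bwpw_restr {n v k : ℕ} (c : BWCfg) (hk : k < n) :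
    bwpw (restr n v c) k = bwpw c (emb v k) := by
  unfold bwpw; rw [restr_lt c hk]

lemma restr_valid {n v : ℕ} {c : BWCfg} (h : bwValid c) : bwValid (restr n v c) := by
  intro k
  by_cases hk : k < n
  · rw [restr_lt c hk]; exact h (emb v k)
  · rw [restr_ge c (by omega)]; simp

lemma restr_update_mem {n v k : ℕ} (hv3 : 3 ≤ v) (hv6 : v ≤ 6) (c : BWCfg)
    (hk : k < n) (x : Bool × Bool) :
    restr n v (Function.update c (emb v k) x) = Function.update (restr n v c) k x := by
  funext k'
  by_cases hk' : k' < n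
  · by_cases he : k' = k
    · subst he
      rw [restr_lt _ hk', Function.update_self, Function.update_self]
    · have hne : emb v k' ≠ emb v k := fun hc => he (emb_inj hv3 hv6 hv3 hv6 hc).2
      rw [restr_lt _ hk', Function.update_of_ne hne, Function.update_of_ne he, restr_lt _ hk']
  · rw [restr_ge _ (by omega), Function.update_of_ne (by omega), restr_ge _ (by omega)]

lemma restr_update_notmem {n v i : ℕ} (c : BWCfg)
    (h : ∀ k, k < n → emb v k ≠ i) (x : Bool × Bool) :
    restr n v (Function.update c i x) = restr n v c := by
  funext k'
  by_cases hk' : k' < n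
  · rw [restr_lt _ hk', restr_lt _ hk', Function.update_of_ne (h k' hk')]
  · rw [restr_ge _ (by omega), restr_ge _ (by omega)]

lemma restr_refl_move (m v : ℕ) (c : BWCfg) :
    BWMove 2 (treeSize 2 (m+2)) (restr (treeSize 2 (m+2)) v c) (restr (treeSize 2 (m+2)) v c) := by
  apply move_refl _ _ _ (treeSize 2 (m+2))
  rw [restr_ge _ (le_refl _)]

lemma sim_move (m v : ℕ) (hv3 : 3 ≤ v) (hv6 : v ≤ 6) (c c' : BWCfg)
    (hout : ∀ j, treeSize 2 (m+4) ≤ j → c j = (false, false))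
    (hmv : BWMove 2 (treeSize 2 (m+4)) c c') :
    BWMove 2 (treeSize 2 (m+2)) (restr (treeSize 2 (m+2)) v c) (restr (treeSize 2 (m+2)) v c') := by
  classical
  set n := treeSize 2 (m+2) with hn
  set N := treeSize 2 (m+4) with hN
  have htn := ts_add_one (m+2)
  have htN := ts_add_one (m+4)
  have h4 : (4:ℕ) ≤ 2^(m+2) := by
    calc (4:ℕ) = 2^2 := by norm_num
    _ ≤ 2^(m+2) := Nat.pow_le_pow_right (by norm_num) (by omega)
  have hn3 : 3 ≤ n := by omega
  have hnodd : ∃ e, 2^(m+2) = 2 * e := ⟨2^(m+1), by rw [pow_succ]; ring⟩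
  rcases hmv with ⟨i, hc'⟩ | ⟨i, hiN, hcov, hctr, hch, hoth⟩ | ⟨i, hiN, hc'⟩ | ⟨i, hleaf, hc'⟩
  · -- remove black
    by_cases hmem : ∃ k, k < n ∧ emb v k = i
    · obtain ⟨k, hk, rfl⟩ := hmem
      left
      refine ⟨k, ?_⟩
      rw [hc', restr_update_mem hv3 hv6 c hk, restr_lt c hk]
    · push_neg at hmem
      rw [hc', restr_update_notmem c hmem]
      exact restr_refl_move m v c
  · -- covered move at i
    by_cases hmem : ∃ k, k < n ∧ emb v k = i
    · obtain ⟨k, hk, rfl⟩ := hmem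
      by_cases hleafk : n ≤ 2*k+1
      · -- k is a leaf of the small tree; then emb v k is a leaf of the big tree: impossible
        exfalso
        have hbig : N ≤ 2 * emb v k + 1 := (emb_leaf_iff hv3 hv6 hk).1 hleafk
        have hch1 : child 2 (emb v k) (2 * emb v k + 1) := ⟨0, by omega, by ring⟩
        have := hcov _ hch1
        rw [pw_of_empty (hout (2 * emb v k + 1) (by omega))] at this
        omega
      · have hk1 : 2*k+1 < n := by omega
        have hk2 : 2*k+2 < n := by omega
        refine Or.inr (Or.inl ⟨k, hk, ?_, ?_, ?_, ?_⟩)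
        · -- covered
          intro j hj
          rw [child2_iff] at hj
          rcases hj with rfl | rfl
          · rw [bwpw_restr c hk1, emb_left]
            exact hcov _ ⟨0, by omega, by ring⟩
          · rw [bwpw_restr c hk2, emb_right]
            exact hcov _ ⟨1, by omega, by ring⟩
        · -- center
          rw [restr_lt c' hk, restr_lt c hk]
          exact hctr
        · -- children
          intro j hj
          rw [child2_iff] at hj
          rcases hj with rfl | rfl
          · rw [restr_lt c' hk1, restr_lt c hk1, emb_left]
            exact hch _ ⟨0, by omega, by ring⟩
          · rw [restr_lt c' hk2, restr_lt c hk2, emb_right]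
            exact hch _ ⟨1, by omega, by ring⟩
        · -- others
          intro j hjk hjch
          by_cases hjn : j < n
          · rw [restr_lt c' hjn, restr_lt c hjn]
            apply hoth
            · exact fun hc => hjk (emb_inj hv3 hv6 hv3 hv6 hc).2
            · rintro ⟨e, he2, heq⟩
              have he01 : e = 0 ∨ e = 1 := by omega
              rcases he01 with rfl | rfl
              · have : emb v j = emb v (2*k+1) := by rw [emb_left]; omega
                have := (emb_inj hv3 hv6 hv3 hv6 this).2
                exact hjch (by rw [child2_iff]; omega)
              · have : emb v j = emb v (2*k+2) := by rw [emb_right]; omega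
                have := (emb_inj hv3 hv6 hv3 hv6 this).2
                exact hjch (by rw [child2_iff]; omega)
          · rw [restr_ge c' (by omega), restr_ge c (by omega)]
    · push_neg at hmem
      have hothers : ∀ k, 1 ≤ k → k < n → c' (emb v k) = c (emb v k) := by
        intro k h1k hkn
        apply hoth
        · exact hmem k hkn
        · rintro ⟨e, he2, heq⟩
          obtain ⟨p, ep, hpl, hp2, hpk⟩ := emb_child_decomp (v := v) h1k
          rw [hpk] at heq
          have hie : emb v p = i := by omega
          exact hmem p (by omega) hie
      by_cases hvi : v = 2*i+1 ∨ v = 2*i+2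
      · -- i is the parent of v
        have hchild : child 2 i v := by rw [child2_iff]; omega
        rcases hch v hchild with hsame | hrem
        · have : restr n v c' = restr n v c := by
            funext k
            by_cases hkn : k < n
            · rcases Nat.eq_zero_or_pos k with rfl | hk1
              · rw [restr_lt _ hkn, restr_lt _ hkn, emb_zero]; exact hsame
              · rw [restr_lt _ hkn, restr_lt _ hkn]; exact hothers k hk1 hkn
            · rw [restr_ge _ (by omega), restr_ge _ (by omega)]
          rw [this]; exact restr_refl_move m v c
        · left
          refine ⟨0, ?_⟩
          funext k
          by_cases hkn : k < n
          · rcases Nat.eq_zero_or_pos k with rfl | hk1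
            · rw [restr_lt _ hkn, Function.update_self, emb_zero, restr_lt _ hkn, emb_zero]
              exact hrem
            · rw [restr_lt _ hkn, Function.update_of_ne (by omega), restr_lt _ hkn]
              exact hothers k hk1 hkn
          · rw [restr_ge _ (by omega), Function.update_of_ne (by omega), restr_ge _ (by omega)]
      · -- fully outside
        have : restr n v c' = restr n v c := by
          funext k
          by_cases hkn : k < n
          · rw [restr_lt _ hkn, restr_lt _ hkn]
            apply hoth
            · exact hmem k hkn
            · rintro ⟨e, he2, heq⟩
              rcases Nat.eq_zero_or_pos k with rfl | hk1
              · rw [emb_zero] at heq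
                exact hvi (by omega)
              · obtain ⟨p, ep, hpl, hp2, hpk⟩ := emb_child_decomp (v := v) hk1
                rw [hpk] at heq
                have hie : emb v p = i := by omega
                exact hmem p (by omega) hie
          · rw [restr_ge _ (by omega), restr_ge _ (by omega)]
        rw [this]; exact restr_refl_move m v c
  · -- place white
    by_cases hmem : ∃ k, k < n ∧ emb v k = i
    · obtain ⟨k, hk, rfl⟩ := hmem
      refine Or.inr (Or.inr (Or.inl ⟨k, hk, ?_⟩))
      rw [hc', restr_update_mem hv3 hv6 c hk, restr_lt c hk]
    · push_neg at hmem
      rw [hc', restr_update_notmem c hmem]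
      exact restr_refl_move m v c
  · -- place black on leaf
    by_cases hmem : ∃ k, k < n ∧ emb v k = i
    · obtain ⟨k, hk, rfl⟩ := hmem
      refine Or.inr (Or.inr (Or.inr ⟨k, ⟨hk, ?_⟩, ?_⟩))
      · exact (emb_leaf_iff hv3 hv6 hk).2 (by have := hleaf.2; omega)
      · rw [hc', restr_update_mem hv3 hv6 c hk, restr_lt c hk]
    · push_neg at hmem
      rw [hc', restr_update_notmem c hmem]
      exact restr_refl_move m v c

end BW17
namespace BW17

lemma extract (m v T : ℕ) (c : ℕ → BWCfg) (hv3 : 3 ≤ v) (hv6 : v ≤ 6)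
    (hP : BWPebbling 2 (treeSize 2 (m+4)) T c) (h0 : BWEmpty (c 0)) (hT : BWEmpty (c T))
    (τ : ℕ) (hτ : τ ≤ T) (hpw : bwpw (c τ) v = 1)
    (r : ℝ) (hr : 0 < r)
    (hIH : ∀ T' (c' : ℕ → BWCfg), BWRootPebbling 2 (treeSize 2 (m+2)) T' c' →
      ∃ t, t ≤ T' ∧ r ≤ (bwweight (treeSize 2 (m+2)) (c' t) : ℝ)) :
    ∃ s, s ≤ T ∧
      (r ≤ ((∑ k ∈ Finset.range (treeSize 2 (m+2)), bwpw (c s) (emb v k) : ℕ) : ℝ)) ∧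
      ∀ t, min s τ ≤ t → t ≤ max s τ →
        ∃ k, k < treeSize 2 (m+2) ∧ c t (emb v k) ≠ (false, false) := by
  classical
  set n := treeSize 2 (m+2) with hn
  set N := treeSize 2 (m+4) with hN
  have hout := out_empty hP h0
  have h4 : (4:ℕ) ≤ 2^(m+2) := by
    calc (4:ℕ) = 2^2 := by norm_num
    _ ≤ 2^(m+2) := Nat.pow_le_pow_right (by norm_num) (by omega)
  have htn := ts_add_one (m+2)
  have hn3 : 3 ≤ n := by omega
  set Emp : ℕ → Prop := fun t => ∀ k, k < n → c t (emb v k) = (false, false) with hEmp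
  have hEmp0 : Emp 0 := fun k _ => h0 _
  have hEmpT : Emp T := fun k _ => hT _
  set A := Nat.findGreatest Emp τ with hA
  have hEA : Emp A := Nat.findGreatest_spec (Nat.zero_le τ) hEmp0
  have hAτ : A ≤ τ := Nat.findGreatest_le τ
  have hAmax : ∀ t, A < t → t ≤ τ → ¬ Emp t := fun t h1 h2 =>
    Nat.findGreatest_is_greatest h1 h2
  have hexB : ∃ t, τ ≤ t ∧ Emp t := ⟨T, hτ, hEmpT⟩
  set B := Nat.find hexB with hB
  obtain ⟨hτB, hEB⟩ := Nat.find_spec hexB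
  have hBT : B ≤ T := Nat.find_min' hexB ⟨hτ, hEmpT⟩
  have hBmin : ∀ t, τ ≤ t → t < B → ¬ Emp t := by
    intro t h1 h2 hE
    exact Nat.find_min hexB h2 ⟨h1, hE⟩
  have hAB : A ≤ B := le_trans hAτ hτB
  -- the restricted pebbling
  have hRP : BWRootPebbling 2 n (B - A) (fun t => restr n v (c (A + t))) := by
    refine ⟨⟨?_, ?_⟩, ?_, ?_, ⟨τ - A, by omega, ?_⟩⟩
    · intro t ht
      exact restr_valid (hP.1 (A + t) (by omega))
    · intro t ht
      have hmv := hP.2 (A + t) (by omega)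
      have := sim_move m v hv3 hv6 (c (A + t)) (c (A + t + 1))
        (hout (A + t) (by omega)) hmv
      show BWMove 2 n (restr n v (c (A + t))) (restr n v (c (A + (t + 1))))
      have he : A + (t + 1) = A + t + 1 := by omega
      rw [he]
      exact this
    · intro k
      by_cases hk : k < n
      · show restr n v (c (A + 0)) k = (false, false)
        rw [show A + 0 = A by omega, restr_lt _ hk]; exact hEA k hk
      · exact restr_ge _ (by omega)
    · intro k
      by_cases hk : k < n
      · show restr n v (c (A + (B - A))) k = (false, false)
        rw [show A + (B - A) = B by omega, restr_lt _ hk]; exact hEB k hk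
      · exact restr_ge _ (by omega)
    · show bwpw (restr n v (c (A + (τ - A)))) 0 = 1
      rw [show A + (τ - A) = τ by omega, bwpw_restr _ (show 0 < n by omega), emb_zero]
      exact hpw
  obtain ⟨t', ht', hw⟩ := hIH (B - A) _ hRP
  refine ⟨A + t', by omega, ?_, ?_⟩
  · have hsum : bwweight n (restr n v (c (A + t'))) =
        ∑ k ∈ Finset.range n, bwpw (c (A + t')) (emb v k) := by
      apply Finset.sum_congr rfl
      intro k hk
      exact bwpw_restr _ (Finset.mem_range.1 hk)
    rw [hsum] at hw
    exact hw
  · -- hull nonemptiness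
    have hne : ¬ Emp (A + t') := by
      intro hE
      have hz : ∑ k ∈ Finset.range n, bwpw (c (A + t')) (emb v k) = 0 :=
        Finset.sum_eq_zero fun k hk => pw_of_empty (hE k (Finset.mem_range.1 hk))
      have hsum : bwweight n (restr n v (c (A + t'))) =
          ∑ k ∈ Finset.range n, bwpw (c (A + t')) (emb v k) := by
        apply Finset.sum_congr rfl
        intro k hk
        exact bwpw_restr _ (Finset.mem_range.1 hk)
      rw [hsum, hz] at hw
      simp at hw
      linarith
    have hAs : A ≤ A + t' := by omega
    have hsB : A + t' ≤ B := by omega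
    have hAne : A + t' ≠ A := fun he => hne (by rw [he]; exact hEA)
    have hBne : A + t' ≠ B := fun he => hne (by rw [he]; exact hEB)
    intro t h1 h2
    have hnet : ¬ Emp t := by
      rcases le_total (A + t') τ with hc | hc
      · exact hAmax t (by omega) (by omega)
      · exact hBmin t (by omega) (by omega)
    simp only [hEmp, not_forall] at hnet
    obtain ⟨k, hk, hne'⟩ := hnet
    exact ⟨k, hk, hne'⟩

lemma weight_ge {n N : ℕ} (c : BWCfg) (v y : ℕ) (hv3 : 3 ≤ v) (hv6 : v ≤ 6)
    (hyN : y < N) (hy : ∀ k, k < n → emb v k ≠ y) (hnN : ∀ k, k < n → emb v k < N) :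
    bwpw c y + ∑ k ∈ Finset.range n, bwpw c (emb v k) ≤ bwweight N c := by
  classical
  have h1 : ∑ k ∈ Finset.range n, bwpw c (emb v k) =
      ∑ j ∈ (Finset.range n).image (emb v), bwpw c j := by
    rw [Finset.sum_image]
    intro a ha b hb hab
    exact (emb_inj hv3 hv6 hv3 hv6 hab).2
  have hynot : y ∉ (Finset.range n).image (emb v) := by
    simp only [Finset.mem_image, Finset.mem_range, not_exists]
    rintro k ⟨hk, hke⟩
    exact hy k hk hke
  have hsub : insert y ((Finset.range n).image (emb v)) ⊆ Finset.range N := by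
    intro j hj
    rcases Finset.mem_insert.1 hj with rfl | hj
    · exact Finset.mem_range.2 hyN
    · obtain ⟨k, hk, rfl⟩ := Finset.mem_image.1 hj
      exact Finset.mem_range.2 (hnN k (Finset.mem_range.1 hk))
  have hle : ∑ j ∈ insert y ((Finset.range n).image (emb v)), bwpw c j ≤ bwweight N c :=
    Finset.sum_le_sum_of_subset hsub
  rw [Finset.sum_insert hynot] at hle
  omega

lemma two_lows {n N : ℕ} {c : ℕ → BWCfg} {v v' s s' τ τ' τ₁ τ₂ : ℕ}
    (hdisj : ∀ k k', emb v k ≠ emb v' k')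
    (hv'N : ∀ k', k' < n → emb v' k' < N)
    (hvN : ∀ k, k < n → emb v k < N)
    (hτ : τ = τ₁ ∨ τ = τ₂) (hτ' : τ' = τ₁ ∨ τ' = τ₂)
    (hull : ∀ t, min s τ ≤ t → t ≤ max s τ → ∃ k, k < n ∧ c t (emb v k) ≠ (false, false))
    (hull' : ∀ t, min s' τ' ≤ t → t ≤ max s' τ' → ∃ k, k < n ∧ c t (emb v' k) ≠ (false, false))
    (OE : ∀ y, y < N → (∀ k, k < n → emb v k ≠ y) → c s y = (false, false))
    (OE' : ∀ y, y < N → (∀ k, k < n → emb v' k ≠ y) → c s' y = (false, false))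
    (hlo : ((s < τ₁ ∧ s < τ₂) ∧ (s' < τ₁ ∧ s' < τ₂)) ∨
           ((τ₁ < s ∧ τ₂ < s) ∧ (τ₁ < s' ∧ τ₂ < s'))) : False := by
  rcases le_total s s' with hss | hss
  · rcases hlo with ⟨hl, hl'⟩ | ⟨hh, hh'⟩
    · obtain ⟨k, hk, hne⟩ := hull s' (by omega) (by rcases hτ with rfl | rfl <;> omega)
      exact hne (OE' _ (hvN k hk) (fun k' _ hE => hdisj k k' hE.symm))
    · obtain ⟨k', hk', hne⟩ := hull' s (by rcases hτ' with rfl | rfl <;> omega) (by omega)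
      exact hne (OE _ (hv'N k' hk') (fun k _ hE => hdisj k k' hE))
  · rcases hlo with ⟨hl, hl'⟩ | ⟨hh, hh'⟩
    · obtain ⟨k', hk', hne⟩ := hull' s (by omega) (by rcases hτ' with rfl | rfl <;> omega)
      exact hne (OE _ (hv'N k' hk') (fun k _ hE => hdisj k k' hE))
    · obtain ⟨k, hk, hne⟩ := hull s' (by rcases hτ with rfl | rfl <;> omega) (by omega)
      exact hne (OE' _ (hvN k hk) (fun k' _ hE => hdisj k k' hE.symm))

lemma side_lemma {τ₁ τ₂ σ s x₁ x₂ : ℕ} {c : ℕ → BWCfg}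
    (hpx₁ : bwpw (c τ₁) x₁ = 1) (hpx₂ : bwpw (c τ₂) x₂ = 1)
    (g1 : ∀ t, min τ₁ σ ≤ t → t ≤ max τ₁ σ → t ≠ τ₁ → 1 ≤ bwpw (c t) 1)
    (g2 : ∀ t, min τ₂ σ ≤ t → t ≤ max τ₂ σ → t ≠ τ₂ → 1 ≤ bwpw (c t) 2)
    (e1 : c s 1 = (false, false)) (e2 : c s 2 = (false, false))
    (ex₁ : c s x₁ = (false, false)) (ex₂ : c s x₂ = (false, false)) :
    (s < τ₁ ∧ s < τ₂) ∨ (τ₁ < s ∧ τ₂ < s) := by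
  have q1 : bwpw (c s) 1 = 0 := pw_of_empty e1
  have q2 : bwpw (c s) 2 = 0 := pw_of_empty e2
  have qx₁ : bwpw (c s) x₁ = 0 := pw_of_empty ex₁
  have qx₂ : bwpw (c s) x₂ = 0 := pw_of_empty ex₂
  have not1 : ¬(min τ₁ σ ≤ s ∧ s ≤ max τ₁ σ) := by
    rintro ⟨ha, hb⟩
    by_cases hs : s = τ₁
    · subst hs; omega
    · have := g1 s ha hb hs; omega
  have not2 : ¬(min τ₂ σ ≤ s ∧ s ≤ max τ₂ σ) := by
    rintro ⟨ha, hb⟩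
    by_cases hs : s = τ₂
    · subst hs; omega
    · have := g2 s ha hb hs; omega
  omega

end BW17
namespace BW17

lemma OE_lemma (m T : ℕ) (c : ℕ → BWCfg) (v s : ℕ) (hv3 : 3 ≤ v) (hv6 : v ≤ 6)
    (hsT : s ≤ T)
    (hcon : ∀ t, t ≤ T → (bwweight (treeSize 2 (m+4)) (c t) : ℝ) < ((m+2:ℕ):ℝ)/2 + 2)
    (hw : ((m+2:ℕ):ℝ)/2 + 1 ≤
      ((∑ k ∈ Finset.range (treeSize 2 (m+2)), bwpw (c s) (emb v k) : ℕ) : ℝ)) :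
    ∀ y, y < treeSize 2 (m+4) → (∀ k, k < treeSize 2 (m+2) → emb v k ≠ y) →
      c s y = (false, false) := by
  intro y hyN hy
  by_contra hne
  have h1y : 1 ≤ bwpw (c s) y := by
    rcases Nat.eq_zero_or_pos (bwpw (c s) y) with hz | hp
    · exact absurd (pw_zero_iff.1 hz) hne
    · exact hp
  have hwg := weight_ge (n := treeSize 2 (m+2)) (N := treeSize 2 (m+4)) (c s) v y hv3 hv6
    hyN hy (fun k hk => emb_lt_ts hv6 hk)
  have hc := hcon s hsT
  have hcast : ((bwpw (c s) y : ℕ) : ℝ) +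
      ((∑ k ∈ Finset.range (treeSize 2 (m+2)), bwpw (c s) (emb v k) : ℕ) : ℝ) ≤
      (bwweight (treeSize 2 (m+4)) (c s) : ℝ) := by
    have := Nat.cast_le (α := ℝ).2 hwg
    push_cast at this ⊢
    linarith
  have h1yr : (1:ℝ) ≤ ((bwpw (c s) y : ℕ) : ℝ) := by exact_mod_cast h1y
  linarith

end BW17

open BW17 in
/-- inductive step for the black-white lower bound: if every
root-pebbling of the height-h binary tree needs weight h/2 + 1 at some time,
then every root-pebbling of the height-(h+2) binary tree needs weight h/2 + 2
at some time. -/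
theorem bw_lower_inductive_step (h : ℕ) (hh : 2 ≤ h)
    (IH : ∀ T (c : ℕ → BWCfg), BWRootPebbling 2 (treeSize 2 h) T c →
      ∃ t, t ≤ T ∧ (h : ℝ) / 2 + 1 ≤ (bwweight (treeSize 2 h) (c t) : ℝ)) :
    ∀ T (c : ℕ → BWCfg), BWRootPebbling 2 (treeSize 2 (h + 2)) T c →
      ∃ t, t ≤ T ∧ (h : ℝ) / 2 + 2 ≤ (bwweight (treeSize 2 (h + 2)) (c t) : ℝ) := by
  obtain ⟨m, rfl⟩ : ∃ m, h = m + 2 := ⟨h - 2, by omega⟩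
  intro T c hRP
  obtain ⟨hP, h0, hTe, t0, ht0, hroot⟩ := hRP
  by_contra hcon
  push_neg at hcon
  simp only [show m + 2 + 2 = m + 4 from rfl] at hP hcon
  have htN := ts_add_one (m+4)
  have h16 : (16:ℕ) ≤ 2^(m+4) := by
    calc (16:ℕ) = 2^4 := by norm_num
    _ ≤ 2^(m+4) := Nat.pow_le_pow_right (by norm_num) (by omega)
  set N := treeSize 2 (m+4) with hNdef
  have hN15 : 15 ≤ N := by omega
  -- root covered at some time σ
  obtain ⟨σ, hσT, hcovσ, _⟩ :=
    cov_of_pebbled (N := N) (x := 0) (by omega) hP h0 hTe ht0 hroot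
  have hu1 : bwpw (c σ) 1 = 1 := hcovσ 1 ⟨0, by omega, by norm_num⟩
  have hu2 : bwpw (c σ) 2 = 1 := hcovσ 2 ⟨1, by omega, by norm_num⟩
  -- u1, u2 covered at times τ₁, τ₂ with guards
  obtain ⟨τ₁, hτ₁T, hcov1, g1⟩ :=
    cov_of_pebbled (N := N) (x := 1) (by omega) hP h0 hTe hσT hu1
  obtain ⟨τ₂, hτ₂T, hcov2, g2⟩ :=
    cov_of_pebbled (N := N) (x := 2) (by omega) hP h0 hTe hσT hu2
  have hp3 : bwpw (c τ₁) 3 = 1 := hcov1 3 ⟨0, by omega, by norm_num⟩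
  have hp4 : bwpw (c τ₁) 4 = 1 := hcov1 4 ⟨1, by omega, by norm_num⟩
  have hp5 : bwpw (c τ₂) 5 = 1 := hcov2 5 ⟨0, by omega, by norm_num⟩
  have hp6 : bwpw (c τ₂) 6 = 1 := hcov2 6 ⟨1, by omega, by norm_num⟩
  -- extract bottlenecks for the four subtrees
  have hrpos : (0:ℝ) < ((m+2:ℕ):ℝ)/2 + 1 := by positivity
  obtain ⟨s₃, hs₃T, hw₃, hull₃⟩ := extract m 3 T c (by norm_num) (by norm_num)
    hP h0 hTe τ₁ hτ₁T hp3 _ hrpos IH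
  obtain ⟨s₄, hs₄T, hw₄, hull₄⟩ := extract m 4 T c (by norm_num) (by norm_num)
    hP h0 hTe τ₁ hτ₁T hp4 _ hrpos IH
  obtain ⟨s₅, hs₅T, hw₅, hull₅⟩ := extract m 5 T c (by norm_num) (by norm_num)
    hP h0 hTe τ₂ hτ₂T hp5 _ hrpos IH
  obtain ⟨s₆, hs₆T, hw₆, hull₆⟩ := extract m 6 T c (by norm_num) (by norm_num)
    hP h0 hTe τ₂ hτ₂T hp6 _ hrpos IH
  -- outside-empty facts
  have OE₃ := OE_lemma m T c 3 s₃ (by norm_num) (by norm_num) hs₃T hcon hw₃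
  have OE₄ := OE_lemma m T c 4 s₄ (by norm_num) (by norm_num) hs₄T hcon hw₄
  have OE₅ := OE_lemma m T c 5 s₅ (by norm_num) (by norm_num) hs₅T hcon hw₅
  have OE₆ := OE_lemma m T c 6 s₆ (by norm_num) (by norm_num) hs₆T hcon hw₆
  -- each bottleneck avoids the interval hull of {τ₁, σ, τ₂}
  have hne3 : ∀ v x : ℕ, 3 ≤ v → v ≤ 6 → x ≤ 6 → x ≠ v →
      ∀ k, k < treeSize 2 (m+2) → emb v k ≠ x :=
    fun v x hv3 hv6 hx hxv k _ => emb_ne_small hv3 hv6 hx hxv k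
  have side₃ : (s₃ < τ₁ ∧ s₃ < τ₂) ∨ (τ₁ < s₃ ∧ τ₂ < s₃) :=
    side_lemma hp4 hp5 g1 g2
      (OE₃ 1 (by omega) (hne3 3 1 (by norm_num) (by norm_num) (by norm_num) (by norm_num)))
      (OE₃ 2 (by omega) (hne3 3 2 (by norm_num) (by norm_num) (by norm_num) (by norm_num)))
      (OE₃ 4 (by omega) (hne3 3 4 (by norm_num) (by norm_num) (by norm_num) (by norm_num)))
      (OE₃ 5 (by omega) (hne3 3 5 (by norm_num) (by norm_num) (by norm_num) (by norm_num)))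
  have side₄ : (s₄ < τ₁ ∧ s₄ < τ₂) ∨ (τ₁ < s₄ ∧ τ₂ < s₄) :=
    side_lemma hp3 hp5 g1 g2
      (OE₄ 1 (by omega) (hne3 4 1 (by norm_num) (by norm_num) (by norm_num) (by norm_num)))
      (OE₄ 2 (by omega) (hne3 4 2 (by norm_num) (by norm_num) (by norm_num) (by norm_num)))
      (OE₄ 3 (by omega) (hne3 4 3 (by norm_num) (by norm_num) (by norm_num) (by norm_num)))
      (OE₄ 5 (by omega) (hne3 4 5 (by norm_num) (by norm_num) (by norm_num) (by norm_num)))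
  have side₅ : (s₅ < τ₁ ∧ s₅ < τ₂) ∨ (τ₁ < s₅ ∧ τ₂ < s₅) :=
    side_lemma hp3 hp6 g1 g2
      (OE₅ 1 (by omega) (hne3 5 1 (by norm_num) (by norm_num) (by norm_num) (by norm_num)))
      (OE₅ 2 (by omega) (hne3 5 2 (by norm_num) (by norm_num) (by norm_num) (by norm_num)))
      (OE₅ 3 (by omega) (hne3 5 3 (by norm_num) (by norm_num) (by norm_num) (by norm_num)))
      (OE₅ 6 (by omega) (hne3 5 6 (by norm_num) (by norm_num) (by norm_num) (by norm_num)))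
  have side₆ : (s₆ < τ₁ ∧ s₆ < τ₂) ∨ (τ₁ < s₆ ∧ τ₂ < s₆) :=
    side_lemma hp3 hp5 g1 g2
      (OE₆ 1 (by omega) (hne3 6 1 (by norm_num) (by norm_num) (by norm_num) (by norm_num)))
      (OE₆ 2 (by omega) (hne3 6 2 (by norm_num) (by norm_num) (by norm_num) (by norm_num)))
      (OE₆ 3 (by omega) (hne3 6 3 (by norm_num) (by norm_num) (by norm_num) (by norm_num)))
      (OE₆ 5 (by omega) (hne3 6 5 (by norm_num) (by norm_num) (by norm_num) (by norm_num)))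
  -- pairwise contradictions
  have hlt : ∀ v : ℕ, v ≤ 6 → ∀ k, k < treeSize 2 (m+2) → emb v k < N :=
    fun v hv6 k hk => emb_lt_ts hv6 hk
  have p34 := two_lows (τ₁ := τ₁) (τ₂ := τ₂)
    (emb_cross (v := 3) (v' := 4) (by norm_num) (by norm_num) (by norm_num) (by norm_num) (by norm_num))
    (hlt 4 (by norm_num)) (hlt 3 (by norm_num)) (Or.inl rfl) (Or.inl rfl) hull₃ hull₄ OE₃ OE₄
  have p35 := two_lows (τ₁ := τ₁) (τ₂ := τ₂)
    (emb_cross (v := 3) (v' := 5) (by norm_num) (by norm_num) (by norm_num) (by norm_num) (by norm_num))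
    (hlt 5 (by norm_num)) (hlt 3 (by norm_num)) (Or.inl rfl) (Or.inr rfl) hull₃ hull₅ OE₃ OE₅
  have p36 := two_lows (τ₁ := τ₁) (τ₂ := τ₂)
    (emb_cross (v := 3) (v' := 6) (by norm_num) (by norm_num) (by norm_num) (by norm_num) (by norm_num))
    (hlt 6 (by norm_num)) (hlt 3 (by norm_num)) (Or.inl rfl) (Or.inr rfl) hull₃ hull₆ OE₃ OE₆
  have p45 := two_lows (τ₁ := τ₁) (τ₂ := τ₂)
    (emb_cross (v := 4) (v' := 5) (by norm_num) (by norm_num) (by norm_num) (by norm_num) (by norm_num))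
    (hlt 5 (by norm_num)) (hlt 4 (by norm_num)) (Or.inl rfl) (Or.inr rfl) hull₄ hull₅ OE₄ OE₅
  have p46 := two_lows (τ₁ := τ₁) (τ₂ := τ₂)
    (emb_cross (v := 4) (v' := 6) (by norm_num) (by norm_num) (by norm_num) (by norm_num) (by norm_num))
    (hlt 6 (by norm_num)) (hlt 4 (by norm_num)) (Or.inl rfl) (Or.inr rfl) hull₄ hull₆ OE₄ OE₆
  have p56 := two_lows (τ₁ := τ₁) (τ₂ := τ₂)
    (emb_cross (v := 5) (v' := 6) (by norm_num) (by norm_num) (by norm_num) (by norm_num) (by norm_num))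
    (hlt 6 (by norm_num)) (hlt 5 (by norm_num)) (Or.inr rfl) (Or.inr rfl) hull₅ hull₆ OE₅ OE₆
  rcases side₃ with h3 | h3 <;> rcases side₄ with h4 | h4 <;>
    rcases side₅ with h5 | h5 <;> rcases side₆ with h6 | h6 <;>
    first
    | exact p34 (Or.inl ⟨h3, h4⟩) | exact p34 (Or.inr ⟨h3, h4⟩)
    | exact p35 (Or.inl ⟨h3, h5⟩) | exact p35 (Or.inr ⟨h3, h5⟩)
    | exact p36 (Or.inl ⟨h3, h6⟩) | exact p36 (Or.inr ⟨h3, h6⟩)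
    | exact p45 (Or.inl ⟨h4, h5⟩) | exact p45 (Or.inr ⟨h4, h5⟩)
    | exact p46 (Or.inl ⟨h4, h6⟩) | exact p46 (Or.inr ⟨h4, h6⟩)
    | exact p56 (Or.inl ⟨h5, h6⟩) | exact p56 (Or.inr ⟨h5, h6⟩)
end
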